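/- arXiv:1503.07624 — 2 statements merged into one kernel-verified Lean document; each statement's English description precedes it below -/
import Mathlib

section
/- In the parallel execution of ARC and OPT, when ARC serves a request that is a page hit (the page is in T₁ ∪ T₂, so the page is moved to MRU(T₂)), the change in the potential Φ = p − [(b₁'−t) + 2(t₁'−t) + 3(b₂'−t) + 4(t₂'−t)] satisfies: ΔΦ = −2 if the page is in T₁'; ΔΦ = 0 if the page is in T₂'; ΔΦ ≤ −4 if the page is in T₁ − T₁'; and ΔΦ ≤ −4 if the page is in T₂ − T₂'. In particular, ΔΦ ≤ 0 on every ARC hit. -/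
abbrev Page := ℕ

/-- A valid offline demand-paging execution with cache size `N` on request
sequence `σ`, starting from the empty cache. `C i` is the cache just before
serving request `i` (so `C (i+1)` is the cache just after serving it).
Demand paging: on a hit the cache is unchanged; on a fault only the requested
page may be brought in. -/
def OptExec (N : ℕ) (σ : List Page) (C : ℕ → Finset Page) : Prop :=
  C 0 = ∅ ∧
  (∀ i, (C i).card ≤ N) ∧
  ∀ i, i < σ.length →
    σ.getD i 0 ∈ C (i + 1) ∧
    C (i + 1) ⊆ C i ∪ {σ.getD i 0} ∧
    (σ.getD i 0 ∈ C i → C (i + 1) = C i)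

/-- Number of page faults incurred by an offline execution `C` on `σ`. -/
def optFaults (σ : List Page) (C : ℕ → Finset Page) : ℕ :=
  ((List.range σ.length).filter (fun i => decide (σ.getD i 0 ∉ C i))).length

/-- The fault count of an optimal offline demand-paging algorithm (OPT)
with cache size `N` on `σ`. -/
noncomputable def optCost (N : ℕ) (σ : List Page) : ℕ :=
  sInf {k | ∃ C, OptExec N σ C ∧ optFaults σ C = k}

/-- The state of the ARC cache: main lists `T1`, `T2` and history lists
`B1`, `B2` (each kept in recency order, MRU at the head, LRU at the end),
together with the adaptive parameter `p`. -/
structure ArcState where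
  T1 : List Page
  T2 : List Page
  B1 : List Page
  B2 : List Page
  p  : ℕ

/-- ARC starts with empty lists and `p = 0`. -/
def ArcState.init : ArcState := ⟨[], [], [], [], 0⟩

/-- ARC's subroutine REPLACE: demote `LRU(T1)` to the MRU position of `B1`
if `|T1| ≥ 1` and either (the requested page was in `B2` and `|T1| = p`) or
`|T1| > p`; otherwise demote `LRU(T2)` to the MRU position of `B2`. -/
def arcReplace (xInB2 : Bool) (s : ArcState) : ArcState :=
  if 1 ≤ s.T1.length ∧ ((xInB2 = true ∧ s.T1.length = s.p) ∨ s.p < s.T1.length) then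
    { s with T1 := s.T1.dropLast, B1 := s.T1.getLast?.toList ++ s.B1 }
  else
    { s with T2 := s.T2.dropLast, B2 := s.T2.getLast?.toList ++ s.B2 }

/-- One step of ARC (cache size `N`, with the ±1 adaptation rule) on a
requested page `x`. -/
def arcStep (N : ℕ) (s : ArcState) (x : Page) : ArcState :=
  if x ∈ s.T1 ∨ x ∈ s.T2 then
    -- cache hit: move `x` to the MRU position of `T2`
    { s with T1 := s.T1.erase x, T2 := x :: s.T2.erase x }
  else if x ∈ s.B1 then
    -- history hit in B1: adapt `p := min (p+1) N`, REPLACE, move `x` to MRU(T2)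
    let s2 := arcReplace false { s with p := min (s.p + 1) N }
    { s2 with B1 := s2.B1.erase x, T2 := x :: s2.T2 }
  else if x ∈ s.B2 then
    -- history hit in B2: adapt `p := max (p-1) 0`, REPLACE, move `x` to MRU(T2)
    let s2 := arcReplace true { s with p := s.p - 1 }
    { s2 with B2 := s2.B2.erase x, T2 := x :: s2.T2 }
  else
    -- cache and directory miss
    let s2 :=
      if s.T1.length + s.B1.length = N then
        if s.T1.length < N then
          arcReplace false { s with B1 := s.B1.dropLast }
        else
          { s with T1 := s.T1.dropLast }
      else if s.T1.length + s.B1.length < N ∧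
          N ≤ s.T1.length + s.T2.length + s.B1.length + s.B2.length then
        arcReplace false
          (if s.T1.length + s.T2.length + s.B1.length + s.B2.length = 2 * N then
            { s with B2 := s.B2.dropLast }
          else s)
      else s
    { s2 with T1 := x :: s2.T1 }

/-- Run ARC on a request sequence. -/
def arcRun (N : ℕ) : ArcState → List Page → ArcState
  | s, [] => s
  | s, x :: xs => arcRun N (arcStep N s x) xs

/-- Number of page faults incurred by ARC on a request sequence. -/
def arcCost (N : ℕ) : ArcState → List Page → ℕ
  | _, [] => 0
  | s, x :: xs => (if x ∈ s.T1 ∨ x ∈ s.T2 then 0 else 1) + arcCost N (arcStep N s x) xs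

/-- `t = t₁ + t₂`, the number of pages in ARC's cache. -/
def arcT (s : ArcState) : ℕ := s.T1.length + s.T2.length

/-- `TOP(X)` for a recency-ordered list `X`: the longest prefix (i.e. the
largest set of most-recently-used pages) of `X` all of whose pages are in
OPT's cache `O`; `topLen` is its size. -/
def topLen (X : List Page) (O : Finset Page) : ℕ :=
  (X.takeWhile (fun q => decide (q ∈ O))).length

/-- `t₁' = |TOP(T1)|`. -/
def arcT1' (s : ArcState) (O : Finset Page) : ℕ := topLen s.T1 O

/-- `t₂' = |TOP(T2)|`. -/
def arcT2' (s : ArcState) (O : Finset Page) : ℕ := topLen s.T2 O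

/-- `b₁' = |TOP(L1) ∩ B1|` where `L1 = T1 · B1`. -/
def arcB1' (s : ArcState) (O : Finset Page) : ℕ :=
  (((s.T1 ++ s.B1).takeWhile (fun q => decide (q ∈ O))).filter
    (fun q => decide (q ∈ s.B1))).length

/-- `b₂' = |TOP(L2) ∩ B2|` where `L2 = T2 · B2`. -/
def arcB2' (s : ArcState) (O : Finset Page) : ℕ :=
  (((s.T2 ++ s.B2).takeWhile (fun q => decide (q ∈ O))).filter
    (fun q => decide (q ∈ s.B2))).length

/-- The potential `Φ = p − [(b₁'−t) + 2(t₁'−t) + 3(b₂'−t) + 4(t₂'−t)]`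
with the value `t` supplied explicitly. -/
def arcPhiAt (s : ArcState) (O : Finset Page) (t : ℤ) : ℤ :=
  (s.p : ℤ) - (((arcB1' s O : ℤ) - t) + 2 * ((arcT1' s O : ℤ) - t)
    + 3 * ((arcB2' s O : ℤ) - t) + 4 * ((arcT2' s O : ℤ) - t))

/-- The potential `Φ = p − [(b₁'−t) + 2(t₁'−t) + 3(b₂'−t) + 4(t₂'−t)]`. -/
def arcPhi (s : ArcState) (O : Finset Page) : ℤ :=
  arcPhiAt s O (arcT s)

/-- ARC's cache directory: all pages it tracks. -/
def arcDir (s : ArcState) : List Page := s.T1 ++ s.T2 ++ s.B1 ++ s.B2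

namespace ArcAux

lemma tw_all {P : Page → Bool} : ∀ {l : List Page}, (∀ a ∈ l, P a = true) → l.takeWhile P = l
  | [], _ => rfl
  | a :: l, h => by
    rw [List.takeWhile_cons_of_pos (h a (by simp))]
    rw [tw_all (fun b hb => h b (List.mem_cons_of_mem _ hb))]

lemma tw_append_all {P : Page → Bool} {l : List Page} (h : ∀ a ∈ l, P a = true) (L : List Page) :
    (l ++ L).takeWhile P = l ++ L.takeWhile P := by
  rw [List.takeWhile_append, if_pos (by rw [tw_all h])]

lemma tw_append_stop {P : Page → Bool} {l : List Page} (h : ∃ a ∈ l, P a = false) (L : List Page) :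
    (l ++ L).takeWhile P = l.takeWhile P := by
  rw [List.takeWhile_append, if_neg]
  intro hlen
  have heq : l.takeWhile P = l := (List.takeWhile_prefix P).eq_of_length hlen
  obtain ⟨a, ha, hPa⟩ := h
  have := List.mem_takeWhile_imp (heq ▸ ha)
  simp [hPa] at this

lemma filt_eq {Q : Page → Bool} {l : List Page} (h : ∀ a ∈ l, Q a = false) (M : List Page) :
    (l ++ M).filter Q = M.filter Q := by
  rw [List.filter_append, List.filter_eq_nil_iff.mpr (fun a ha => by simp [h a ha]), List.nil_append]

lemma split_tw {O : Finset Page} {T : List Page} {x : Page}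
    (hxtw : x ∈ T.takeWhile (fun q => decide (q ∈ O))) :
    ∃ pre S, T = pre ++ x :: S ∧ (∀ a ∈ pre, a ∈ O) ∧ x ∈ O := by
  obtain ⟨rest, hr⟩ := List.takeWhile_prefix (l := T) (fun q => decide (q ∈ O))
  obtain ⟨pre, suf, htw⟩ := List.append_of_mem hxtw
  refine ⟨pre, suf ++ rest, ?_, ?_, ?_⟩
  · rw [← hr, htw]; simp
  · intro a ha
    have ha' : a ∈ T.takeWhile (fun q => decide (q ∈ O)) := by
      rw [htw]; exact List.mem_append_left _ ha
    simpa using List.mem_takeWhile_imp ha'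
  · simpa using List.mem_takeWhile_imp hxtw

lemma count_dir (s : ArcState) (a : Page) :
    List.count a (arcDir s) =
      List.count a s.T1 + List.count a s.T2 + List.count a s.B1 + List.count a s.B2 := by
  simp [arcDir, List.count_append]; omega

lemma nodup_of_counts {l : List Page} (h : ∀ a, List.count a l ≤ 1) : l.Nodup :=
  List.nodup_iff_count_le_one.mpr h

lemma phi_hit (s : ArcState) (O : Finset Page) (x : Page)
    (hnd : (arcDir s).Nodup) (hxO : x ∈ O)
    (s' : ArcState) (hs' : s' = { s with T1 := s.T1.erase x, T2 := x :: s.T2.erase x }) :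
    (x ∈ s.T1.takeWhile (fun r => decide (r ∈ O)) → arcPhi s' O - arcPhi s O = -2) ∧
    (x ∈ s.T2.takeWhile (fun r => decide (r ∈ O)) → arcPhi s' O - arcPhi s O = 0) ∧
    (x ∈ s.T1 ∧ x ∉ s.T1.takeWhile (fun r => decide (r ∈ O)) → arcPhi s' O - arcPhi s O ≤ -4) ∧
    (x ∈ s.T2 ∧ x ∉ s.T2.takeWhile (fun r => decide (r ∈ O)) → arcPhi s' O - arcPhi s O ≤ -4) := by
  subst hs'
  have hdj : ∀ a, List.count a (arcDir s) ≤ 1 := List.nodup_iff_count_le_one.mp hnd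
  have hT1nd : s.T1.Nodup := nodup_of_counts (fun a => by
    have := hdj a; rw [count_dir] at this; omega)
  have hT2nd : s.T2.Nodup := nodup_of_counts (fun a => by
    have := hdj a; rw [count_dir] at this; omega)
  have d12 : ∀ a ∈ s.T1, a ∉ s.T2 := fun a ha hb => by
    have := hdj a; rw [count_dir] at this
    have h1 := List.count_pos_iff.mpr ha
    have h2 := List.count_pos_iff.mpr hb
    omega
  have d1B1 : ∀ a ∈ s.T1, a ∉ s.B1 := fun a ha hb => by
    have := hdj a; rw [count_dir] at this
    have h1 := List.count_pos_iff.mpr ha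
    have h2 := List.count_pos_iff.mpr hb
    omega
  have d1B2 : ∀ a ∈ s.T1, a ∉ s.B2 := fun a ha hb => by
    have := hdj a; rw [count_dir] at this
    have h1 := List.count_pos_iff.mpr ha
    have h2 := List.count_pos_iff.mpr hb
    omega
  have d2B2 : ∀ a ∈ s.T2, a ∉ s.B2 := fun a ha hb => by
    have := hdj a; rw [count_dir] at this
    have h1 := List.count_pos_iff.mpr ha
    have h2 := List.count_pos_iff.mpr hb
    omega
  have hPx : (fun q => decide (q ∈ O)) x = true := by simpa using hxO
  -- Case: x ∈ T1'
  have main1 : x ∈ s.T1.takeWhile (fun r => decide (r ∈ O)) →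
      arcPhi { s with T1 := s.T1.erase x, T2 := x :: s.T2.erase x } O - arcPhi s O = -2 := by
    intro hxtw
    have hx1 : x ∈ s.T1 := (List.takeWhile_prefix _).sublist.subset hxtw
    have hxT2 : x ∉ s.T2 := d12 x hx1
    have herase2 : s.T2.erase x = s.T2 := List.erase_of_not_mem hxT2
    obtain ⟨pre, S, hT1, hpreO, -⟩ := split_tw hxtw
    have hxpre : x ∉ pre := by
      rw [hT1, List.nodup_append] at hT1nd
      exact fun hp => hT1nd.2.2 x hp x List.mem_cons_self rfl
    have herase : s.T1.erase x = pre ++ S := by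
      rw [hT1, List.erase_append_right _ hxpre, List.erase_cons_head]
    have hpre : ∀ a ∈ pre, (fun q => decide (q ∈ O)) a = true := fun a ha => by
      simpa using hpreO a ha
    have hQpre : ∀ a ∈ pre, (fun q => decide (q ∈ s.B1)) a = false := fun a ha => by
      simpa using d1B1 a (hT1 ▸ List.mem_append_left _ ha)
    have hQx : ¬ (fun q => decide (q ∈ s.B1)) x = true := by
      simpa using d1B1 x hx1
    have ht : arcT { s with T1 := s.T1.erase x, T2 := x :: s.T2.erase x } = arcT s := by
      simp only [arcT]
      rw [herase, herase2, hT1]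
      simp only [List.length_append, List.length_cons]; omega
    have ht2 : arcT2' { s with T1 := s.T1.erase x, T2 := x :: s.T2.erase x } O
        = arcT2' s O + 1 := by
      simp only [arcT2', topLen]
      rw [herase2, List.takeWhile_cons_of_pos (p := fun q => decide (q ∈ O)) hPx]
      simp
    have hb2 : arcB2' { s with T1 := s.T1.erase x, T2 := x :: s.T2.erase x } O
        = arcB2' s O := by
      simp only [arcB2']
      rw [herase2]
      simp only [List.cons_append]
      rw [List.takeWhile_cons_of_pos (p := fun q => decide (q ∈ O)) hPx,
        List.filter_cons_of_neg (p := fun q => decide (q ∈ s.B2)) (by simpa using d1B2 x hx1)]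
    have ht1 : arcT1' s O = arcT1' { s with T1 := s.T1.erase x, T2 := x :: s.T2.erase x } O
        + 1 := by
      simp only [arcT1', topLen]
      rw [herase, hT1, tw_append_all hpre, tw_append_all hpre,
        List.takeWhile_cons_of_pos (p := fun q => decide (q ∈ O)) hPx]
      simp only [List.length_append, List.length_cons]; omega
    have hb1 : arcB1' { s with T1 := s.T1.erase x, T2 := x :: s.T2.erase x } O
        = arcB1' s O := by
      simp only [arcB1']
      rw [herase, hT1]
      simp only [List.append_assoc, List.cons_append]
      rw [tw_append_all hpre, tw_append_all hpre,
        List.takeWhile_cons_of_pos (p := fun q => decide (q ∈ O)) hPx,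
        filt_eq hQpre, filt_eq hQpre,
        List.filter_cons_of_neg (p := fun q => decide (q ∈ s.B1)) hQx]
    simp only [arcPhi, arcPhiAt, ht]
    omega
  -- Case: x ∈ T1 - T1'
  have main3 : x ∈ s.T1 ∧ x ∉ s.T1.takeWhile (fun r => decide (r ∈ O)) →
      arcPhi { s with T1 := s.T1.erase x, T2 := x :: s.T2.erase x } O - arcPhi s O ≤ -4 := by
    rintro ⟨hx1, hxtw⟩
    have hxT2 : x ∉ s.T2 := d12 x hx1
    have herase2 : s.T2.erase x = s.T2 := List.erase_of_not_mem hxT2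
    obtain ⟨pre, S, hT1⟩ := List.append_of_mem hx1
    have hxpre : x ∉ pre := by
      rw [hT1, List.nodup_append] at hT1nd
      exact fun hp => hT1nd.2.2 x hp x List.mem_cons_self rfl
    have herase : s.T1.erase x = pre ++ S := by
      rw [hT1, List.erase_append_right _ hxpre, List.erase_cons_head]
    have hstop : ∃ a ∈ pre, (fun q => decide (q ∈ O)) a = false := by
      by_contra hall
      push_neg at hall
      have hall' : ∀ a ∈ pre, (fun q => decide (q ∈ O)) a = true := fun a ha =>
        eq_true_of_ne_false (hall a ha)
      apply hxtw
      rw [hT1, tw_append_all hall',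
        List.takeWhile_cons_of_pos (p := fun q => decide (q ∈ O)) hPx]
      exact List.mem_append_right _ List.mem_cons_self
    have ht : arcT { s with T1 := s.T1.erase x, T2 := x :: s.T2.erase x } = arcT s := by
      simp only [arcT]
      rw [herase, herase2, hT1]
      simp only [List.length_append, List.length_cons]; omega
    have ht2 : arcT2' { s with T1 := s.T1.erase x, T2 := x :: s.T2.erase x } O
        = arcT2' s O + 1 := by
      simp only [arcT2', topLen]
      rw [herase2, List.takeWhile_cons_of_pos (p := fun q => decide (q ∈ O)) hPx]
      simp
    have hb2 : arcB2' { s with T1 := s.T1.erase x, T2 := x :: s.T2.erase x } O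
        = arcB2' s O := by
      simp only [arcB2']
      rw [herase2]
      simp only [List.cons_append]
      rw [List.takeWhile_cons_of_pos (p := fun q => decide (q ∈ O)) hPx,
        List.filter_cons_of_neg (p := fun q => decide (q ∈ s.B2)) (by simpa using d1B2 x hx1)]
    have ht1 : arcT1' { s with T1 := s.T1.erase x, T2 := x :: s.T2.erase x } O
        = arcT1' s O := by
      simp only [arcT1', topLen]
      rw [herase, hT1, tw_append_stop hstop, tw_append_stop hstop]
    have hb1 : arcB1' { s with T1 := s.T1.erase x, T2 := x :: s.T2.erase x } O
        = arcB1' s O := by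
      simp only [arcB1']
      rw [herase, hT1]
      simp only [List.append_assoc, List.cons_append]
      rw [tw_append_stop hstop, tw_append_stop hstop]
    simp only [arcPhi, arcPhiAt, ht]
    omega
  -- Case: x ∈ T2'
  have main2 : x ∈ s.T2.takeWhile (fun r => decide (r ∈ O)) →
      arcPhi { s with T1 := s.T1.erase x, T2 := x :: s.T2.erase x } O - arcPhi s O = 0 := by
    intro hxtw
    have hx2 : x ∈ s.T2 := (List.takeWhile_prefix _).sublist.subset hxtw
    have hxT1 : x ∉ s.T1 := fun h => d12 x h hx2
    have herase1 : s.T1.erase x = s.T1 := List.erase_of_not_mem hxT1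
    obtain ⟨pre, S, hT2, hpreO, -⟩ := split_tw hxtw
    have hxpre : x ∉ pre := by
      rw [hT2, List.nodup_append] at hT2nd
      exact fun hp => hT2nd.2.2 x hp x List.mem_cons_self rfl
    have herase : s.T2.erase x = pre ++ S := by
      rw [hT2, List.erase_append_right _ hxpre, List.erase_cons_head]
    have hpre : ∀ a ∈ pre, (fun q => decide (q ∈ O)) a = true := fun a ha => by
      simpa using hpreO a ha
    have hQpre : ∀ a ∈ pre, (fun q => decide (q ∈ s.B2)) a = false := fun a ha => by
      simpa using d2B2 a (hT2 ▸ List.mem_append_left _ ha)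
    have hQx : ¬ (fun q => decide (q ∈ s.B2)) x = true := by
      simpa using d2B2 x hx2
    have ht : arcT { s with T1 := s.T1.erase x, T2 := x :: s.T2.erase x } = arcT s := by
      simp only [arcT]
      rw [herase1, herase, hT2]
      simp only [List.length_append, List.length_cons]; omega
    have ht1 : arcT1' { s with T1 := s.T1.erase x, T2 := x :: s.T2.erase x } O
        = arcT1' s O := by
      simp only [arcT1']
      rw [herase1]
    have hb1 : arcB1' { s with T1 := s.T1.erase x, T2 := x :: s.T2.erase x } O
        = arcB1' s O := by
      simp only [arcB1']
      rw [herase1]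
    have ht2 : arcT2' { s with T1 := s.T1.erase x, T2 := x :: s.T2.erase x } O
        = arcT2' s O := by
      simp only [arcT2', topLen]
      rw [herase, hT2,
        List.takeWhile_cons_of_pos (p := fun q => decide (q ∈ O)) hPx,
        tw_append_all hpre, tw_append_all hpre,
        List.takeWhile_cons_of_pos (p := fun q => decide (q ∈ O)) hPx]
      simp only [List.length_append, List.length_cons]; omega
    have hb2 : arcB2' { s with T1 := s.T1.erase x, T2 := x :: s.T2.erase x } O
        = arcB2' s O := by
      simp only [arcB2']
      rw [herase, hT2]
      simp only [List.append_assoc, List.cons_append]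
      rw [List.takeWhile_cons_of_pos (p := fun q => decide (q ∈ O)) hPx,
        tw_append_all hpre, tw_append_all hpre,
        List.takeWhile_cons_of_pos (p := fun q => decide (q ∈ O)) hPx,
        List.filter_cons_of_neg (p := fun q => decide (q ∈ s.B2)) hQx,
        filt_eq hQpre, filt_eq hQpre,
        List.filter_cons_of_neg (p := fun q => decide (q ∈ s.B2)) hQx]
    simp only [arcPhi, arcPhiAt, ht]
    omega
  -- Case: x ∈ T2 - T2'
  have main4 : x ∈ s.T2 ∧ x ∉ s.T2.takeWhile (fun r => decide (r ∈ O)) →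
      arcPhi { s with T1 := s.T1.erase x, T2 := x :: s.T2.erase x } O - arcPhi s O ≤ -4 := by
    rintro ⟨hx2, hxtw⟩
    have hxT1 : x ∉ s.T1 := fun h => d12 x h hx2
    have herase1 : s.T1.erase x = s.T1 := List.erase_of_not_mem hxT1
    obtain ⟨pre, S, hT2⟩ := List.append_of_mem hx2
    have hxpre : x ∉ pre := by
      rw [hT2, List.nodup_append] at hT2nd
      exact fun hp => hT2nd.2.2 x hp x List.mem_cons_self rfl
    have herase : s.T2.erase x = pre ++ S := by
      rw [hT2, List.erase_append_right _ hxpre, List.erase_cons_head]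
    have hstop : ∃ a ∈ pre, (fun q => decide (q ∈ O)) a = false := by
      by_contra hall
      push_neg at hall
      have hall' : ∀ a ∈ pre, (fun q => decide (q ∈ O)) a = true := fun a ha =>
        eq_true_of_ne_false (hall a ha)
      apply hxtw
      rw [hT2, tw_append_all hall',
        List.takeWhile_cons_of_pos (p := fun q => decide (q ∈ O)) hPx]
      exact List.mem_append_right _ List.mem_cons_self
    have hQx : ¬ (fun q => decide (q ∈ s.B2)) x = true := by
      simpa using d2B2 x hx2
    have ht : arcT { s with T1 := s.T1.erase x, T2 := x :: s.T2.erase x } = arcT s := by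
      simp only [arcT]
      rw [herase1, herase, hT2]
      simp only [List.length_append, List.length_cons]; omega
    have ht1 : arcT1' { s with T1 := s.T1.erase x, T2 := x :: s.T2.erase x } O
        = arcT1' s O := by
      simp only [arcT1']
      rw [herase1]
    have hb1 : arcB1' { s with T1 := s.T1.erase x, T2 := x :: s.T2.erase x } O
        = arcB1' s O := by
      simp only [arcB1']
      rw [herase1]
    have ht2 : arcT2' { s with T1 := s.T1.erase x, T2 := x :: s.T2.erase x } O
        = arcT2' s O + 1 := by
      simp only [arcT2', topLen]
      rw [herase, hT2,
        List.takeWhile_cons_of_pos (p := fun q => decide (q ∈ O)) hPx,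
        tw_append_stop hstop, tw_append_stop hstop]
      simp
    have hb2 : arcB2' { s with T1 := s.T1.erase x, T2 := x :: s.T2.erase x } O
        = arcB2' s O := by
      simp only [arcB2']
      rw [herase, hT2]
      simp only [List.append_assoc, List.cons_append]
      rw [List.takeWhile_cons_of_pos (p := fun q => decide (q ∈ O)) hPx,
        tw_append_stop hstop, tw_append_stop hstop,
        List.filter_cons_of_neg (p := fun q => decide (q ∈ s.B2)) hQx]
    simp only [arcPhi, arcPhiAt, ht]
    omega
  exact ⟨main1, main2, main3, main4⟩

lemma dlg (l : List Page) : l.dropLast ++ l.getLast?.toList = l := by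
  induction l using List.reverseRecOn with
  | nil => rfl
  | append_singleton xs x _ => simp
lemma replace_count (b : Bool) (s : ArcState) (a : Page) :
    List.count a (arcReplace b s).T1 + List.count a (arcReplace b s).B1
        = List.count a s.T1 + List.count a s.B1 ∧
    List.count a (arcReplace b s).T2 + List.count a (arcReplace b s).B2
        = List.count a s.T2 + List.count a s.B2 ∧
    List.count a s.B1 ≤ List.count a (arcReplace b s).B1 ∧
    List.count a s.B2 ≤ List.count a (arcReplace b s).B2 := by
  unfold arcReplace
  split
  · refine ⟨?_, by simp, ?_, by simp⟩
    · conv_rhs => rw [← dlg s.T1]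
      simp [List.count_append]; omega
    · simp [List.count_append]
  · refine ⟨by simp, ?_, by simp, ?_⟩
    · conv_rhs => rw [← dlg s.T2]
      simp [List.count_append]; omega
    · simp [List.count_append]
lemma replace_dir_count (b : Bool) (s : ArcState) (a : Page) :
    List.count a (arcDir (arcReplace b s)) = List.count a (arcDir s) := by
  obtain ⟨h1, h2, _, _⟩ := replace_count b s a
  rw [count_dir, count_dir]; omega
lemma count_erase' (x a : Page) (l : List Page) :
    List.count a (l.erase x) = List.count a l - if x = a then 1 else 0 := by
  rw [List.count_erase]; simp
lemma step_nodup (N : ℕ) (s : ArcState) (x : Page) (h : (arcDir s).Nodup) :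
    (arcDir (arcStep N s x)).Nodup := by
  have hc : ∀ a, List.count a (arcDir s) ≤ 1 := List.nodup_iff_count_le_one.mp h
  rw [arcStep]
  split
  · -- cache hit
    rename_i hhit
    refine nodup_of_counts (fun a => ?_)
    have hx1 : 1 ≤ List.count x s.T1 + List.count x s.T2 := by
      rcases hhit with h' | h'
      · have := List.count_pos_iff.mpr h'; omega
      · have := List.count_pos_iff.mpr h'; omega
    have hca := hc a; have hcx := hc x
    rw [count_dir] at hca hcx
    rw [count_dir]
    simp only [List.count_cons, count_erase', beq_iff_eq]
    rcases eq_or_ne x a with rfl | hax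
    · simp; omega
    · simp [hax, Ne.symm hax]; omega
  · rename_i hhit
    split
    · -- B1 hit
      rename_i hB1
      dsimp only
      refine nodup_of_counts (fun a => ?_)
      have hca := hc a; have hcx := hc x
      rw [count_dir] at hca hcx
      have hxB1 : 1 ≤ List.count x s.B1 := List.count_pos_iff.mpr hB1
      obtain ⟨ha1, ha2, ha3, ha4⟩ := replace_count false { s with p := min (s.p + 1) N } a
      obtain ⟨hx1, hx2, hx3, hx4⟩ := replace_count false { s with p := min (s.p + 1) N } x
      dsimp only at ha1 ha2 ha3 ha4 hx1 hx2 hx3 hx4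
      rw [count_dir]
      simp only [List.count_cons, count_erase', beq_iff_eq]
      by_cases hax : x = a
      · subst hax; simp only [if_pos rfl, if_true]; omega
      · simp only [if_neg hax, if_neg (Ne.symm hax)]; omega
    · rename_i hB1
      split
      · -- B2 hit
        rename_i hB2
        dsimp only
        refine nodup_of_counts (fun a => ?_)
        have hca := hc a; have hcx := hc x
        rw [count_dir] at hca hcx
        have hxB2 : 1 ≤ List.count x s.B2 := List.count_pos_iff.mpr hB2
        obtain ⟨ha1, ha2, ha3, ha4⟩ := replace_count true { s with p := s.p - 1 } a
        obtain ⟨hx1, hx2, hx3, hx4⟩ := replace_count true { s with p := s.p - 1 } x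
        dsimp only at ha1 ha2 ha3 ha4 hx1 hx2 hx3 hx4
        rw [count_dir]
        simp only [List.count_cons, count_erase', beq_iff_eq]
        by_cases hax : x = a
        · subst hax; simp only [if_pos rfl, if_true]; omega
        · simp only [if_neg hax, if_neg (Ne.symm hax)]; omega
      · -- miss
        rename_i hB2
        dsimp only
        push_neg at hhit
        have hbound : ∀ a, List.count a (arcDir
            (if s.T1.length + s.B1.length = N then
              if s.T1.length < N then arcReplace false { s with B1 := s.B1.dropLast }
              else { s with T1 := s.T1.dropLast }
            else if s.T1.length + s.B1.length < N ∧
                N ≤ s.T1.length + s.T2.length + s.B1.length + s.B2.length then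
              arcReplace false
                (if s.T1.length + s.T2.length + s.B1.length + s.B2.length = 2 * N then
                  { s with B2 := s.B2.dropLast }
                else s)
            else s)) ≤ List.count a (arcDir s) := by
          intro a
          split
          · split
            · rw [replace_dir_count, count_dir, count_dir]
              have := (List.dropLast_sublist s.B1).count_le a
              simp at *; omega
            · rw [count_dir, count_dir]
              have := (List.dropLast_sublist s.T1).count_le a
              simp at *; omega
          · split
            · rw [replace_dir_count]
              split
              · rw [count_dir, count_dir]
                have := (List.dropLast_sublist s.B2).count_le a
                simp at *; omega
              · exact le_refl _
            · exact le_refl _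
        refine nodup_of_counts (fun a => ?_)
        rw [count_dir]
        dsimp only
        simp only [List.count_cons, beq_iff_eq]
        have hba := hbound a
        have hbx := hbound x
        have hxz : List.count x (arcDir s) = 0 := by
          rw [List.count_eq_zero]
          simp only [arcDir, List.mem_append]
          push_neg
          exact ⟨⟨⟨hhit.1, hhit.2⟩, hB1⟩, hB2⟩
        have hca := hc a
        rw [count_dir, count_dir] at hba
        rw [count_dir, count_dir] at hbx
        rw [count_dir] at hca hxz
        by_cases hax : x = a
        · subst hax; simp only [if_pos rfl, if_true]; omega
        · simp only [if_neg hax]; omega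
lemma run_nodup (N : ℕ) : ∀ (l : List Page) (s : ArcState),
    (arcDir s).Nodup → (arcDir (arcRun N s l)).Nodup
  | [], _, h => h
  | x :: l, s, h => run_nodup N l _ (step_nodup N s x h)

end ArcAux

/-- Case I. In the parallel execution of ARC and OPT, when
ARC serves a request `σ_j` that is a page hit (the page is in `T1 ∪ T2` and is
moved to `MRU(T2)`), the change of the potential
`Φ = p − [(b₁'−t) + 2(t₁'−t) + 3(b₂'−t) + 4(t₂'−t)]` (w.r.t. OPT's cache
`C (j+1)`) satisfies: `ΔΦ = −2` if the page is in `T1'`; `ΔΦ = 0` if it is in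
`T2'`; `ΔΦ ≤ −4` if it is in `T1 − T1'`; `ΔΦ ≤ −4` if it is in `T2 − T2'`;
in particular `ΔΦ ≤ 0` on every ARC hit. -/
theorem arc_hit_potential (N : ℕ) (σ : List Page) (C : ℕ → Finset Page)
    (hC : OptExec N σ C) (hCopt : optFaults σ C = optCost N σ)
    (j : ℕ) (hj : j < σ.length)
    (s : ArcState) (hs : s = arcRun N ArcState.init (σ.take j))
    (hhit : σ.getD j 0 ∈ s.T1 ∨ σ.getD j 0 ∈ s.T2) :
    (σ.getD j 0 ∈ s.T1.takeWhile (fun r => decide (r ∈ C (j + 1))) →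
      arcPhi (arcStep N s (σ.getD j 0)) (C (j + 1)) - arcPhi s (C (j + 1)) = -2) ∧
    (σ.getD j 0 ∈ s.T2.takeWhile (fun r => decide (r ∈ C (j + 1))) →
      arcPhi (arcStep N s (σ.getD j 0)) (C (j + 1)) - arcPhi s (C (j + 1)) = 0) ∧
    (σ.getD j 0 ∈ s.T1 ∧
        σ.getD j 0 ∉ s.T1.takeWhile (fun r => decide (r ∈ C (j + 1))) →
      arcPhi (arcStep N s (σ.getD j 0)) (C (j + 1)) - arcPhi s (C (j + 1)) ≤ -4) ∧
    (σ.getD j 0 ∈ s.T2 ∧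
        σ.getD j 0 ∉ s.T2.takeWhile (fun r => decide (r ∈ C (j + 1))) →
      arcPhi (arcStep N s (σ.getD j 0)) (C (j + 1)) - arcPhi s (C (j + 1)) ≤ -4) ∧
    arcPhi (arcStep N s (σ.getD j 0)) (C (j + 1)) - arcPhi s (C (j + 1)) ≤ 0 := by
  obtain ⟨-, -, hstep⟩ := hC
  have hxO : σ.getD j 0 ∈ C (j + 1) := (hstep j hj).1
  have hnd : (arcDir s).Nodup := by
    rw [hs]
    exact ArcAux.run_nodup N _ _ (by simp [arcDir, ArcState.init])
  have hse : arcStep N s (σ.getD j 0) =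
      { s with T1 := s.T1.erase (σ.getD j 0),
               T2 := (σ.getD j 0) :: s.T2.erase (σ.getD j 0) } := by
    rw [arcStep, if_pos hhit]
  obtain ⟨m1, m2, m3, m4⟩ := ArcAux.phi_hit s (C (j + 1)) (σ.getD j 0) hnd hxO _ hse
  refine ⟨m1, m2, m3, m4, ?_⟩
  rcases hhit with h1 | h2
  · by_cases htw : σ.getD j 0 ∈ s.T1.takeWhile (fun r => decide (r ∈ C (j + 1)))
    · have := m1 htw; omega
    · have := m3 ⟨h1, htw⟩; omega
  · by_cases htw : σ.getD j 0 ∈ s.T2.takeWhile (fun r => decide (r ∈ C (j + 1)))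
    · have := m2 htw; omega
    · have := m4 ⟨h2, htw⟩; omega
end

section
/- In the parallel execution of ARC and OPT, after phase P(0), when ARC serves a request on which it misses and the requested page is in B₁ (so p is updated to min(p+1, N), REPLACE is called, and the page is moved to MRU(T₂)), the change in the potential Φ = p − [(b₁'−t) + 2(t₁'−t) + 3(b₂'−t) + 4(t₂'−t)] satisfies ΔΦ ≤ −1; more precisely, ΔΦ ≤ −1 if the page is in B₁' and ΔΦ ≤ −2 if the page is in B₁ − B₁'. -/
set_option linter.unusedSectionVars false

namespace ArcAux
variable {α : Type*} [DecidableEq α] (p : α → Bool)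

theorem takeWhile_append_all : ∀ (l1 l2 : List α), (∀ a ∈ l1, p a = true) →
    (l1 ++ l2).takeWhile p = l1 ++ l2.takeWhile p
  | [], l2, _ => by simp
  | a :: l1, l2, h => by
    simp only [List.cons_append, List.takeWhile_cons, h a (by simp), if_true]
    rw [takeWhile_append_all l1 l2 (fun b hb => h b (by simp [hb]))]

theorem takeWhile_append_lt : ∀ (l1 l2 : List α), (l1.takeWhile p).length < l1.length →
    (l1 ++ l2).takeWhile p = l1.takeWhile p
  | [], _, h => by simp at h
  | a :: l1, l2, h => by
    cases hpa : p a with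
    | false => simp [List.takeWhile_cons, hpa]
    | true =>
      simp only [List.takeWhile_cons, hpa, if_true, List.length_cons] at h
      simp only [List.cons_append, List.takeWhile_cons, hpa, if_true]
      rw [takeWhile_append_lt l1 l2 (by omega)]

theorem takeWhile_take : ∀ (n : ℕ) (l : List α), (l.take n).takeWhile p = (l.takeWhile p).take n
  | 0, l => by simp
  | n+1, [] => by simp
  | n+1, a :: l => by
    cases hpa : p a with
    | false => simp [List.takeWhile_cons, hpa]
    | true => simp [List.takeWhile_cons, hpa, takeWhile_take n l]

theorem length_takeWhile_dropLast (l : List α) :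
    (l.dropLast.takeWhile p).length = min (l.takeWhile p).length (l.length - 1) := by
  rw [List.dropLast_eq_take, takeWhile_take, List.length_take, Nat.min_comm]

theorem length_takeWhile_erase_ge (x : α) : ∀ (l : List α), x ∈ l.takeWhile p →
    (l.takeWhile p).length ≤ ((l.erase x).takeWhile p).length + 1
  | [], h => by simp at h
  | a :: l, h => by
    cases hpa : p a with
    | false => simp [List.takeWhile_cons, hpa] at h
    | true =>
      simp only [List.takeWhile_cons, hpa, if_true, List.mem_cons] at h
      by_cases hax : a = x
      · subst hax
        simp [List.erase_cons_head, List.takeWhile_cons, hpa]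
      · rcases h with h | h
        · exact absurd h.symm hax
        · rw [List.erase_cons_tail (by simp [hax])]
          simp only [List.takeWhile_cons, hpa, if_true, List.length_cons]
          exact Nat.succ_le_succ (length_takeWhile_erase_ge x l h)

theorem takeWhile_erase_of_not_mem (x : α) (hpx : p x = true) : ∀ (l : List α),
    x ∉ l.takeWhile p → (l.erase x).takeWhile p = l.takeWhile p
  | [], _ => by simp
  | a :: l, h => by
    cases hpa : p a with
    | false =>
      have hax : ¬ a = x := fun he => by rw [he, hpx] at hpa; simp at hpa
      rw [List.erase_cons_tail (by simp [hax])]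
      simp [List.takeWhile_cons, hpa]
    | true =>
      simp only [List.takeWhile_cons, hpa, if_true, List.mem_cons, not_or] at h
      rw [List.erase_cons_tail (by simpa using fun he : a = x => h.1 he.symm)]
      simp only [List.takeWhile_cons, hpa, if_true]
      rw [takeWhile_erase_of_not_mem x hpx l h.2]

theorem length_filter_mono (q1 q2 : α → Bool) (h : ∀ a, q1 a = true → q2 a = true) :
    ∀ (l : List α), (l.filter q1).length ≤ (l.filter q2).length
  | [] => by simp
  | a :: l => by
    have ih := length_filter_mono q1 q2 h l
    cases h1 : q1 a with
    | true => simp only [List.filter_cons, h1, h a h1, if_true, List.length_cons]; omega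
    | false =>
      cases h2 : q2 a with
      | true => simp only [List.filter_cons, h1, h2]; simp; omega
      | false => simp only [List.filter_cons, h1, h2]; simpa using ih

theorem length_filter_cons_ge (m : α) (B : List α) (hmB : m ∉ B) :
    ∀ (W : List α), m ∈ W →
    (W.filter (fun q => decide (q ∈ B))).length + 1 ≤ (W.filter (fun q => decide (q ∈ m :: B))).length
  | [], h => by simp at h
  | a :: W, h => by
    have mono := length_filter_mono (fun q => decide (q ∈ B))
      (fun q => decide (q ∈ m :: B)) (by intro a ha; simp at ha ⊢; exact Or.inr ha) W
    rw [List.filter_cons, List.filter_cons]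
    by_cases ham : a = m
    · subst ham
      rw [if_neg (by simpa using hmB), if_pos (by simp)]
      simp only [List.length_cons]
      omega
    · have h' : m ∈ W := by
        rcases List.mem_cons.mp h with h | h
        · exact absurd h.symm ham
        · exact h
      have ih := length_filter_cons_ge m B hmB W h'
      by_cases haB : a ∈ B
      · rw [if_pos (by simpa using haB), if_pos (by simp [haB])]
        simp only [List.length_cons]
        omega
      · rw [if_neg (by simpa using haB), if_neg (by simp [ham, haB])]
        omega

end ArcAux

namespace Branch
variable {α : Type*} [DecidableEq α] (p : α → Bool)

theorem mem_of_mem_takeWhile {l : List α} {a : α} (h : a ∈ l.takeWhile p) : a ∈ l :=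
  (List.takeWhile_sublist p).subset h

theorem takeWhile_eq_self_of_all (l : List α) (h : ∀ a ∈ l, p a = true) :
    l.takeWhile p = l := by
  have := ArcAux.takeWhile_append_all p l [] h
  simpa using this

theorem length_takeWhile_lt_of_not_all :
    ∀ (l : List α), (¬ ∀ a ∈ l, p a = true) → (l.takeWhile p).length < l.length
  | [], h => absurd (by simp) h
  | a :: l, h => by
    cases hpa : p a with
    | false => simp [List.takeWhile_cons, hpa]
    | true =>
      have : ¬ ∀ b ∈ l, p b = true := by
        intro hall
        refine h ?_
        intro b hb
        rcases List.mem_cons.mp hb with rfl | hb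
        · exact hpa
        · exact hall b hb
      simp only [List.takeWhile_cons, hpa, if_true, List.length_cons]
      exact Nat.succ_lt_succ (length_takeWhile_lt_of_not_all l this)

/-- old `b1'`-style value is `0` when `takeWhile` stops inside `T`. -/
theorem filter_takeWhile_lt (T B : List α) (h : (T.takeWhile p).length < T.length)
    (hd : ∀ a ∈ T, a ∉ B) :
    (((T ++ B).takeWhile p).filter (fun q => decide (q ∈ B))).length = 0 := by
  rw [ArcAux.takeWhile_append_lt p T B h]
  rw [List.length_eq_zero_iff, List.filter_eq_nil_iff]
  intro a ha
  simpa using hd a (mem_of_mem_takeWhile p ha)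

theorem not_mem_takeWhile_lt (T B : List α) (x : α) (h : (T.takeWhile p).length < T.length)
    (hxT : x ∉ T) : x ∉ (T ++ B).takeWhile p := by
  rw [ArcAux.takeWhile_append_lt p T B h]
  exact fun hx => hxT (mem_of_mem_takeWhile p hx)

/-- old `b1'`-style value when all of `T` is in the top. -/
theorem filter_takeWhile_all (T B : List α) (h : ∀ a ∈ T, p a = true)
    (hd : ∀ a ∈ T, a ∉ B) :
    (((T ++ B).takeWhile p).filter (fun q => decide (q ∈ B))).length
      = (B.takeWhile p).length := by
  rw [ArcAux.takeWhile_append_all p T B h, List.filter_append]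
  have h1 : T.filter (fun q => decide (q ∈ B)) = [] := by
    rw [List.filter_eq_nil_iff]; intro a ha; simpa using hd a ha
  have h2 : (B.takeWhile p).filter (fun q => decide (q ∈ B)) = B.takeWhile p := by
    rw [List.filter_eq_self]; intro a ha; simpa using mem_of_mem_takeWhile p ha
  rw [h1, h2]; simp

end Branch

namespace Branch2
open ArcAux Branch
variable {α : Type*} [DecidableEq α] (p : α → Bool)

/-- L1 contribution of REPLACE branch A (demote `LRU(T1)`) plus the B1→T2 move. -/
theorem branchA_L1 (D B : List α) (l x : α)
    (hnd : (D ++ [l]).Nodup)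
    (hdisj : ∀ a ∈ D ++ [l], a ∉ B)
    (hxB : x ∈ B) (hpx : p x = true) (hxT : x ∉ D ++ [l]) :
    (((D ++ [l] ++ B).takeWhile p).filter (fun q => decide (q ∈ B))).length
      + 2 * ((D ++ [l]).takeWhile p).length
      + (if x ∈ (D ++ [l] ++ B).takeWhile p then 0 else 1)
    ≤ (((D ++ (l :: B.erase x)).takeWhile p).filter (fun q => decide (q ∈ l :: B.erase x))).length
      + 2 * (D.takeWhile p).length + 2 := by
  have hlD : l ∉ D := by
    have := List.nodup_append'.mp hnd
    intro hl; exact this.2.2 hl (by simp)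
  have hnewlist : D ++ (l :: B.erase x) = (D ++ [l]) ++ B.erase x := by simp
  by_cases hall : ∀ a ∈ D ++ [l], p a = true
  · -- all of T1 is in OPT's cache
    have hTtw : (D ++ [l]).takeWhile p = D ++ [l] := takeWhile_eq_self_of_all p _ hall
    have hDtw : D.takeWhile p = D :=
      takeWhile_eq_self_of_all p _ (fun a ha => hall a (by simp [ha]))
    have holdW : (D ++ [l] ++ B).takeWhile p = (D ++ [l]) ++ B.takeWhile p :=
      takeWhile_append_all p _ _ hall
    have holdb : (((D ++ [l] ++ B).takeWhile p).filter (fun q => decide (q ∈ B))).length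
        = (B.takeWhile p).length := filter_takeWhile_all p _ _ hall hdisj
    have hnewW : ((D ++ [l]) ++ B.erase x).takeWhile p
        = (D ++ [l]) ++ (B.erase x).takeWhile p := takeWhile_append_all p _ _ hall
    have hnewb : (((D ++ (l :: B.erase x)).takeWhile p).filter
        (fun q => decide (q ∈ l :: B.erase x))).length
        = 1 + ((B.erase x).takeWhile p).length := by
      rw [hnewlist, hnewW, List.filter_append, List.filter_append]
      have h1 : D.filter (fun q => decide (q ∈ l :: B.erase x)) = [] := by
        rw [List.filter_eq_nil_iff]
        intro a ha
        simp only [List.mem_cons, decide_eq_true_eq, not_or]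
        exact ⟨fun he => hlD (he ▸ ha),
          fun hm => hdisj a (by simp [ha]) (List.mem_of_mem_erase hm)⟩
      have h2 : [l].filter (fun q => decide (q ∈ l :: B.erase x)) = [l] := by simp
      have h3 : ((B.erase x).takeWhile p).filter (fun q => decide (q ∈ l :: B.erase x))
          = (B.erase x).takeWhile p := by
        rw [List.filter_eq_self]
        intro a ha
        simp [List.mem_cons, Or.inr (mem_of_mem_takeWhile p ha)]
      rw [h1, h2, h3]
      simp [Nat.add_comm]
    have hxW : (x ∈ (D ++ [l] ++ B).takeWhile p) ↔ x ∈ B.takeWhile p := by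
      rw [holdW, List.mem_append]
      constructor
      · rintro (h | h)
        · exact absurd h hxT
        · exact h
      · exact Or.inr
    by_cases hxw : x ∈ B.takeWhile p
    · have hE := length_takeWhile_erase_ge p x B hxw
      rw [if_pos (hxW.mpr hxw), holdb, hnewb, hTtw, hDtw]
      simp only [List.length_append, List.length_cons, List.length_nil]
      omega
    · have hE : ((B.erase x).takeWhile p) = B.takeWhile p :=
        takeWhile_erase_of_not_mem p x hpx B hxw
      rw [if_neg (fun hc => hxw (hxW.mp hc)), holdb, hnewb, hE, hTtw, hDtw]
      simp only [List.length_append, List.length_cons, List.length_nil]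
      omega
  · -- takeWhile stops strictly inside T1
    have hlt : ((D ++ [l]).takeWhile p).length < (D ++ [l]).length :=
      length_takeWhile_lt_of_not_all p _ hall
    have holdb := filter_takeWhile_lt p (D ++ [l]) B hlt hdisj
    have hxW : x ∉ (D ++ [l] ++ B).takeWhile p := not_mem_takeWhile_lt p _ B x hlt hxT
    have hDlen : (D.takeWhile p).length = ((D ++ [l]).takeWhile p).length := by
      have := length_takeWhile_dropLast p (D ++ [l])
      rw [List.dropLast_concat] at this
      simp only [List.length_append, List.length_cons, List.length_nil] at this hlt
      omega
    rw [if_neg hxW, holdb, hDlen]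
    omega

/-- L1 contribution of REPLACE branch B plus the B1→T2 move:
`T1` unchanged, `B1` loses `x`. -/
theorem branchB_L1 (T B : List α) (x : α)
    (hdisj : ∀ a ∈ T, a ∉ B)
    (hxB : x ∈ B) (hpx : p x = true) (hxT : x ∉ T) :
    (((T ++ B).takeWhile p).filter (fun q => decide (q ∈ B))).length
      + (if x ∈ (T ++ B).takeWhile p then 0 else 1)
    ≤ (((T ++ B.erase x).takeWhile p).filter (fun q => decide (q ∈ B.erase x))).length
      + 1 := by
  have hdisj' : ∀ a ∈ T, a ∉ B.erase x := fun a ha hm => hdisj a ha (List.mem_of_mem_erase hm)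
  by_cases hall : ∀ a ∈ T, p a = true
  · have holdb := filter_takeWhile_all p T B hall hdisj
    have hnewb := filter_takeWhile_all p T (B.erase x) hall hdisj'
    have hxW : (x ∈ (T ++ B).takeWhile p) ↔ x ∈ B.takeWhile p := by
      rw [takeWhile_append_all p _ _ hall, List.mem_append]
      constructor
      · rintro (h | h)
        · exact absurd h hxT
        · exact h
      · exact Or.inr
    by_cases hxw : x ∈ B.takeWhile p
    · have hE := length_takeWhile_erase_ge p x B hxw
      rw [if_pos (hxW.mpr hxw), holdb, hnewb]
      omega
    · have hE : ((B.erase x).takeWhile p) = B.takeWhile p :=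
        takeWhile_erase_of_not_mem p x hpx B hxw
      rw [if_neg (fun hc => hxw (hxW.mp hc)), holdb, hnewb, hE]
  · have hlt : (T.takeWhile p).length < T.length := length_takeWhile_lt_of_not_all p _ hall
    have holdb := filter_takeWhile_lt p T B hlt hdisj
    have hxW : x ∉ (T ++ B).takeWhile p := not_mem_takeWhile_lt p _ B x hlt hxT
    rw [if_neg hxW, holdb]
    omega

/-- L2 contribution of REPLACE branch A: `T2` gains `x` at MRU, `B2` unchanged. -/
theorem branchA_L2 (T B : List α) (x : α) (hxB : x ∉ B) (hpx : p x = true) :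
    3 * (((T ++ B).takeWhile p).filter (fun q => decide (q ∈ B))).length
      + 4 * (T.takeWhile p).length + 4
    ≤ 3 * (((x :: T ++ B).takeWhile p).filter (fun q => decide (q ∈ B))).length
      + 4 * ((x :: T).takeWhile p).length := by
  have h1 : (x :: T ++ B).takeWhile p = x :: (T ++ B).takeWhile p := by
    simp [List.takeWhile_cons, hpx]
  have h2 : (x :: T).takeWhile p = x :: T.takeWhile p := by
    simp [List.takeWhile_cons, hpx]
  rw [h1, h2, List.filter_cons, if_neg (by simpa using hxB)]
  simp only [List.length_cons]
  omega

/-- L2 contribution of REPLACE branch B: `LRU(T2) = m` demoted to `MRU(B2)`,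
`x` becomes `MRU(T2)`. -/
theorem branchB_L2 (D B : List α) (m x : α)
    (hmB : m ∉ B) (hxm : x ≠ m) (hxB : x ∉ B) (hpx : p x = true) :
    3 * (((D ++ [m] ++ B).takeWhile p).filter (fun q => decide (q ∈ B))).length
      + 4 * ((D ++ [m]).takeWhile p).length + 3
    ≤ 3 * (((x :: D ++ (m :: B)).takeWhile p).filter (fun q => decide (q ∈ m :: B))).length
      + 4 * ((x :: D).takeWhile p).length := by
  have hlist : x :: D ++ (m :: B) = x :: ((D ++ [m]) ++ B) := by simp
  have hW : (x :: D ++ (m :: B)).takeWhile p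
      = x :: ((D ++ [m]) ++ B).takeWhile p := by
    rw [hlist]; simp [List.takeWhile_cons, hpx]
  have hxnew : ¬ (x ∈ m :: B) := by simp [hxm, hxB]
  have hfilter : ((x :: D ++ (m :: B)).takeWhile p).filter (fun q => decide (q ∈ m :: B))
      = (((D ++ [m]) ++ B).takeWhile p).filter (fun q => decide (q ∈ m :: B)) := by
    rw [hW, List.filter_cons, if_neg (by simpa using hxnew)]
  have h2 : (x :: D).takeWhile p = x :: D.takeWhile p := by
    simp [List.takeWhile_cons, hpx]
  have hmono : ((((D ++ [m]) ++ B).takeWhile p).filter (fun q => decide (q ∈ B))).length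
      ≤ ((((D ++ [m]) ++ B).takeWhile p).filter (fun q => decide (q ∈ m :: B))).length :=
    length_filter_mono _ _ (by intro a ha; simp at ha ⊢; exact Or.inr ha) _
  by_cases hall : ∀ a ∈ D ++ [m], p a = true
  · -- all of T2 in OPT's cache: m is in the top, so b2' gains one
    have hTtw : (D ++ [m]).takeWhile p = D ++ [m] := takeWhile_eq_self_of_all p _ hall
    have hDtw : D.takeWhile p = D :=
      takeWhile_eq_self_of_all p _ (fun a ha => hall a (by simp [ha]))
    have hmW : m ∈ ((D ++ [m]) ++ B).takeWhile p := by
      rw [takeWhile_append_all p _ _ hall]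
      simp
    have hplus := length_filter_cons_ge m B hmB _ hmW
    rw [hfilter, hTtw, h2, hDtw]
    simp only [List.length_append, List.length_cons, List.length_nil]
    omega
  · have hlt : ((D ++ [m]).takeWhile p).length < (D ++ [m]).length :=
      length_takeWhile_lt_of_not_all p _ hall
    have hDlen : (D.takeWhile p).length = ((D ++ [m]).takeWhile p).length := by
      have := length_takeWhile_dropLast p (D ++ [m])
      rw [List.dropLast_concat] at this
      simp only [List.length_append, List.length_cons, List.length_nil] at this hlt
      omega
    rw [hfilter, h2]
    simp only [List.length_cons]
    omega

end Branch2

namespace StructAux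
variable {α : Type*} [DecidableEq α]

theorem disj_mono {l r l' r' : List α} (hl : ∀ a ∈ l', a ∈ l) (hr : ∀ a ∈ r', a ∈ r)
    (h : l.Disjoint r) : l'.Disjoint r' := fun _ ha hb => h (hl _ ha) (hr _ hb)

theorem disj_cons_left {l r : List α} {x : α} (h1 : x ∉ r) (h2 : l.Disjoint r) :
    (x :: l).Disjoint r := by
  intro a ha hb
  rcases List.mem_cons.mp ha with rfl | ha
  · exact h1 hb
  · exact h2 ha hb

theorem disj_cons_right {l r : List α} {x : α} (h1 : x ∉ l) (h2 : l.Disjoint r) :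
    l.Disjoint (x :: r) := by
  intro a ha hb
  rcases List.mem_cons.mp hb with rfl | hb
  · exact h1 ha
  · exact h2 ha hb

theorem mem_of_mem_dropLast {l : List α} {a : α} (h : a ∈ l.dropLast) : a ∈ l :=
  (List.dropLast_sublist l).subset h

theorem getLast_not_mem_dropLast {l : List α} (hnd : l.Nodup) (hne : l ≠ []) :
    l.getLast hne ∉ l.dropLast := by
  have hl := List.dropLast_append_getLast hne
  rw [← hl] at hnd
  have := List.nodup_append'.mp hnd
  intro hm
  exact this.2.2 hm (by simp)

theorem not_mem_erase_self {l : List α} (hnd : l.Nodup) (x : α) : x ∉ l.erase x := by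
  intro h
  exact ((List.Nodup.mem_erase_iff hnd).mp h).1 rfl

theorem getLast?_toList_of_ne_nil (l : List α) (h : l ≠ []) :
    l.getLast?.toList = [l.getLast h] := by
  rw [List.getLast?_eq_getLast h]
  rfl

end StructAux

namespace ArcInvNS
open StructAux

/-- The inductive invariant maintained by ARC. -/
def Inv (N : ℕ) (s : ArcState) : Prop :=
  s.T1.Nodup ∧ s.T2.Nodup ∧ s.B1.Nodup ∧ s.B2.Nodup ∧
  s.T1.Disjoint s.T2 ∧ s.T1.Disjoint s.B1 ∧ s.T1.Disjoint s.B2 ∧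
  s.T2.Disjoint s.B1 ∧ s.T2.Disjoint s.B2 ∧ s.B1.Disjoint s.B2 ∧
  s.p ≤ N ∧
  (1 ≤ s.B1.length + s.B2.length → 1 ≤ N) ∧
  (1 ≤ N → s.T1.length + s.T2.length ≤ N) ∧
  (1 ≤ s.B1.length + s.B2.length → s.T1.length + s.T2.length = N) ∧
  (1 ≤ s.B1.length → s.T1.length + s.B1.length ≤ N)

theorem arcStep_hit {N : ℕ} {s : ArcState} {x : Page} (h : x ∈ s.T1 ∨ x ∈ s.T2) :
    arcStep N s x = ⟨s.T1.erase x, x :: s.T2.erase x, s.B1, s.B2, s.p⟩ := by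
  rw [arcStep, if_pos h]

theorem arcReplace_A {s : ArcState} {b : Bool}
    (h : 1 ≤ s.T1.length ∧ ((b = true ∧ s.T1.length = s.p) ∨ s.p < s.T1.length)) :
    arcReplace b s = ⟨s.T1.dropLast, s.T2, s.T1.getLast?.toList ++ s.B1, s.B2, s.p⟩ := by
  rw [arcReplace, if_pos h]

theorem arcReplace_B {s : ArcState} {b : Bool}
    (h : ¬(1 ≤ s.T1.length ∧ ((b = true ∧ s.T1.length = s.p) ∨ s.p < s.T1.length))) :
    arcReplace b s = ⟨s.T1, s.T2.dropLast, s.B1, s.T2.getLast?.toList ++ s.B2, s.p⟩ := by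
  rw [arcReplace, if_neg h]

theorem inv_init (N : ℕ) : Inv N ArcState.init := by
  simp [Inv, ArcState.init, List.Disjoint]

end ArcInvNS

namespace ArcInvNS
open StructAux

theorem arcStep_B1_A {N : ℕ} {s : ArcState} {x : Page}
    (h1 : ¬(x ∈ s.T1 ∨ x ∈ s.T2)) (h2 : x ∈ s.B1)
    (hr : 1 ≤ s.T1.length ∧ min (s.p + 1) N < s.T1.length) :
    arcStep N s x = ⟨s.T1.dropLast, x :: s.T2,
      (s.T1.getLast?.toList ++ s.B1).erase x, s.B2, min (s.p + 1) N⟩ := by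
  rw [arcStep, if_neg h1, if_pos h2]
  dsimp only
  rw [arcReplace_A (by exact ⟨hr.1, Or.inr hr.2⟩)]

theorem arcStep_B1_B {N : ℕ} {s : ArcState} {x : Page}
    (h1 : ¬(x ∈ s.T1 ∨ x ∈ s.T2)) (h2 : x ∈ s.B1)
    (hr : ¬(1 ≤ s.T1.length ∧ min (s.p + 1) N < s.T1.length)) :
    arcStep N s x = ⟨s.T1, x :: s.T2.dropLast,
      s.B1.erase x, s.T2.getLast?.toList ++ s.B2, min (s.p + 1) N⟩ := by
  rw [arcStep, if_neg h1, if_pos h2]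
  dsimp only
  rw [arcReplace_B (by
    intro hc
    refine hr ⟨hc.1, ?_⟩
    rcases hc.2 with ⟨hf, _⟩ | hlt
    · simp at hf
    · exact hlt)]

theorem arcStep_B2_A {N : ℕ} {s : ArcState} {x : Page}
    (h1 : ¬(x ∈ s.T1 ∨ x ∈ s.T2)) (h2 : x ∉ s.B1) (h3 : x ∈ s.B2)
    (hr : 1 ≤ s.T1.length ∧ (s.T1.length = s.p - 1 ∨ s.p - 1 < s.T1.length)) :
    arcStep N s x = ⟨s.T1.dropLast, x :: s.T2,
      s.T1.getLast?.toList ++ s.B1, s.B2.erase x, s.p - 1⟩ := by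
  rw [arcStep, if_neg h1, if_neg h2, if_pos h3]
  dsimp only
  rw [arcReplace_A (by
    refine ⟨hr.1, ?_⟩
    rcases hr.2 with h | h
    · exact Or.inl ⟨rfl, h⟩
    · exact Or.inr h)]

theorem arcStep_B2_B {N : ℕ} {s : ArcState} {x : Page}
    (h1 : ¬(x ∈ s.T1 ∨ x ∈ s.T2)) (h2 : x ∉ s.B1) (h3 : x ∈ s.B2)
    (hr : ¬(1 ≤ s.T1.length ∧ (s.T1.length = s.p - 1 ∨ s.p - 1 < s.T1.length))) :
    arcStep N s x = ⟨s.T1, x :: s.T2.dropLast,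
      s.B1, (s.T2.getLast?.toList ++ s.B2).erase x, s.p - 1⟩ := by
  rw [arcStep, if_neg h1, if_neg h2, if_pos h3]
  dsimp only
  rw [arcReplace_B (by
    intro hc
    refine hr ⟨hc.1, ?_⟩
    rcases hc.2 with ⟨_, he⟩ | hlt
    · exact Or.inl he
    · exact Or.inr hlt)]

theorem arcStep_M1A {N : ℕ} {s : ArcState} {x : Page}
    (h1 : ¬(x ∈ s.T1 ∨ x ∈ s.T2)) (h2 : x ∉ s.B1) (h3 : x ∉ s.B2)
    (hN : s.T1.length + s.B1.length = N) (hlt : s.T1.length < N)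
    (hr : 1 ≤ s.T1.length ∧ s.p < s.T1.length) :
    arcStep N s x = ⟨x :: s.T1.dropLast, s.T2,
      s.T1.getLast?.toList ++ s.B1.dropLast, s.B2, s.p⟩ := by
  rw [arcStep, if_neg h1, if_neg h2, if_neg h3]
  dsimp only
  rw [if_pos hN, if_pos hlt, arcReplace_A (by exact ⟨hr.1, Or.inr hr.2⟩)]

theorem arcStep_M1B {N : ℕ} {s : ArcState} {x : Page}
    (h1 : ¬(x ∈ s.T1 ∨ x ∈ s.T2)) (h2 : x ∉ s.B1) (h3 : x ∉ s.B2)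
    (hN : s.T1.length + s.B1.length = N) (hlt : s.T1.length < N)
    (hr : ¬(1 ≤ s.T1.length ∧ s.p < s.T1.length)) :
    arcStep N s x = ⟨x :: s.T1, s.T2.dropLast,
      s.B1.dropLast, s.T2.getLast?.toList ++ s.B2, s.p⟩ := by
  rw [arcStep, if_neg h1, if_neg h2, if_neg h3]
  dsimp only
  rw [if_pos hN, if_pos hlt, arcReplace_B (by
    intro hc
    refine hr ⟨hc.1, ?_⟩
    rcases hc.2 with ⟨hf, _⟩ | hlt'
    · simp at hf
    · exact hlt')]

theorem arcStep_M2 {N : ℕ} {s : ArcState} {x : Page}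
    (h1 : ¬(x ∈ s.T1 ∨ x ∈ s.T2)) (h2 : x ∉ s.B1) (h3 : x ∉ s.B2)
    (hN : s.T1.length + s.B1.length = N) (hlt : ¬ s.T1.length < N) :
    arcStep N s x = ⟨x :: s.T1.dropLast, s.T2, s.B1, s.B2, s.p⟩ := by
  rw [arcStep, if_neg h1, if_neg h2, if_neg h3]
  dsimp only
  rw [if_pos hN, if_neg hlt]

theorem arcStep_M3A {N : ℕ} {s : ArcState} {x : Page}
    (h1 : ¬(x ∈ s.T1 ∨ x ∈ s.T2)) (h2 : x ∉ s.B1) (h3 : x ∉ s.B2)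
    (hN : ¬ s.T1.length + s.B1.length = N)
    (hc2 : s.T1.length + s.B1.length < N ∧
      N ≤ s.T1.length + s.T2.length + s.B1.length + s.B2.length)
    (hr : 1 ≤ s.T1.length ∧ s.p < s.T1.length) :
    arcStep N s x = ⟨x :: s.T1.dropLast, s.T2,
      s.T1.getLast?.toList ++ s.B1,
      (if s.T1.length + s.T2.length + s.B1.length + s.B2.length = 2 * N then
        s.B2.dropLast else s.B2), s.p⟩ := by
  rw [arcStep, if_neg h1, if_neg h2, if_neg h3]
  dsimp only
  rw [if_neg hN, if_pos hc2]
  by_cases hd : s.T1.length + s.T2.length + s.B1.length + s.B2.length = 2 * N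
  · simp only [if_pos hd]
    rw [arcReplace_A (by exact ⟨hr.1, Or.inr hr.2⟩)]
  · simp only [if_neg hd]
    rw [arcReplace_A (by exact ⟨hr.1, Or.inr hr.2⟩)]

theorem arcStep_M3B {N : ℕ} {s : ArcState} {x : Page}
    (h1 : ¬(x ∈ s.T1 ∨ x ∈ s.T2)) (h2 : x ∉ s.B1) (h3 : x ∉ s.B2)
    (hN : ¬ s.T1.length + s.B1.length = N)
    (hc2 : s.T1.length + s.B1.length < N ∧
      N ≤ s.T1.length + s.T2.length + s.B1.length + s.B2.length)
    (hr : ¬(1 ≤ s.T1.length ∧ s.p < s.T1.length)) :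
    arcStep N s x = ⟨x :: s.T1, s.T2.dropLast, s.B1,
      s.T2.getLast?.toList ++
      (if s.T1.length + s.T2.length + s.B1.length + s.B2.length = 2 * N then
        s.B2.dropLast else s.B2), s.p⟩ := by
  rw [arcStep, if_neg h1, if_neg h2, if_neg h3]
  dsimp only
  rw [if_neg hN, if_pos hc2]
  have hr' : ∀ (u : ArcState), u.T1 = s.T1 → u.p = s.p →
      ¬(1 ≤ u.T1.length ∧ ((false = true ∧ u.T1.length = u.p) ∨ u.p < u.T1.length)) := by
    intro u hu1 hup hc
    rw [hu1, hup] at hc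
    refine hr ⟨hc.1, ?_⟩
    rcases hc.2 with ⟨hf, _⟩ | hlt'
    · simp at hf
    · exact hlt'
  by_cases hd : s.T1.length + s.T2.length + s.B1.length + s.B2.length = 2 * N
  · simp only [if_pos hd]
    rw [arcReplace_B (hr' ⟨s.T1, s.T2, s.B1, s.B2.dropLast, s.p⟩ rfl rfl)]
  · simp only [if_neg hd]
    rw [arcReplace_B (hr' s rfl rfl)]

theorem arcStep_M4 {N : ℕ} {s : ArcState} {x : Page}
    (h1 : ¬(x ∈ s.T1 ∨ x ∈ s.T2)) (h2 : x ∉ s.B1) (h3 : x ∉ s.B2)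
    (hN : ¬ s.T1.length + s.B1.length = N)
    (hc2 : ¬(s.T1.length + s.B1.length < N ∧
      N ≤ s.T1.length + s.T2.length + s.B1.length + s.B2.length)) :
    arcStep N s x = ⟨x :: s.T1, s.T2, s.B1, s.B2, s.p⟩ := by
  rw [arcStep, if_neg h1, if_neg h2, if_neg h3]
  dsimp only
  rw [if_neg hN, if_neg hc2]

end ArcInvNS

namespace ArcInvNS
open StructAux

theorem inv_hit {N : ℕ} {s : ArcState} {x : Page} (hInv : Inv N s)
    (h : x ∈ s.T1 ∨ x ∈ s.T2) : Inv N (arcStep N s x) := by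
  obtain ⟨nd1, nd2, nd3, nd4, d12, d13, d14, d23, d24, d34, hp, hN0, ht, hfull, hl1⟩ := hInv
  rw [arcStep_hit h]
  have subE : ∀ (l : List Page) (a : Page), a ∈ l.erase x → a ∈ l :=
    fun l a ha => List.mem_of_mem_erase ha
  have hxB1 : x ∉ s.B1 := by
    rcases h with h | h
    · exact fun hb => d13 h hb
    · exact fun hb => d23 h hb
  have hxB2 : x ∉ s.B2 := by
    rcases h with h | h
    · exact fun hb => d14 h hb
    · exact fun hb => d24 h hb
  have hlen : (s.T1.erase x).length + (x :: s.T2.erase x).length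
      = s.T1.length + s.T2.length := by
    by_cases hx1 : x ∈ s.T1
    · have hx2 : x ∉ s.T2 := fun hh => d12 hx1 hh
      rw [List.erase_of_not_mem hx2, List.length_erase_of_mem hx1, List.length_cons]
      have := List.length_pos_iff.mpr (List.ne_nil_of_mem hx1)
      omega
    · have hx2 : x ∈ s.T2 := h.resolve_left hx1
      rw [List.erase_of_not_mem hx1]
      simp only [List.length_cons, List.length_erase_of_mem hx2]
      have := List.length_pos_iff.mpr (List.ne_nil_of_mem hx2)
      omega
  refine ⟨nd1.erase x, ?_, nd3, nd4, ?_, ?_, ?_, ?_, ?_, d34, hp, ?_, ?_, ?_, ?_⟩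
  · exact List.nodup_cons.mpr ⟨not_mem_erase_self nd2 x, nd2.erase x⟩
  · exact disj_cons_right (not_mem_erase_self nd1 x) (disj_mono (subE _) (subE _) d12)
  · exact disj_mono (subE _) (fun a ha => ha) d13
  · exact disj_mono (subE _) (fun a ha => ha) d14
  · exact disj_cons_left hxB1 (disj_mono (subE _) (fun a ha => ha) d23)
  · exact disj_cons_left hxB2 (disj_mono (subE _) (fun a ha => ha) d24)
  · exact hN0
  · intro h1; have := ht h1; simp only at hlen ⊢; omega
  · intro h1; have := hfull h1; simp only at hlen ⊢; omega
  · intro h1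
    have := hl1 h1
    have : (s.T1.erase x).length ≤ s.T1.length := List.length_erase_le
    simp only at *
    omega

end ArcInvNS

namespace ArcInvNS
open StructAux

theorem inv_B1A {N : ℕ} {s : ArcState} {x : Page} (hInv : Inv N s)
    (h1 : ¬(x ∈ s.T1 ∨ x ∈ s.T2)) (h2 : x ∈ s.B1)
    (hr : 1 ≤ s.T1.length ∧ min (s.p + 1) N < s.T1.length) :
    Inv N (arcStep N s x) := by
  obtain ⟨nd1, nd2, nd3, nd4, d12, d13, d14, d23, d24, d34, hp, hN0, ht, hfull, hl1⟩ := hInv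
  have hxT1 : x ∉ s.T1 := fun h => h1 (Or.inl h)
  have hxT2 : x ∉ s.T2 := fun h => h1 (Or.inr h)
  have hne : s.T1 ≠ [] := by
    intro he; rw [he] at hr; simp at hr
  set l := s.T1.getLast hne with hl
  have hlT1 : l ∈ s.T1 := List.getLast_mem hne
  have hB1eq : (s.T1.getLast?.toList ++ s.B1).erase x = l :: s.B1.erase x := by
    rw [getLast?_toList_of_ne_nil _ hne, List.singleton_append,
      List.erase_cons_tail (by simp; intro he; exact hxT1 (he ▸ hlT1))]
  rw [arcStep_B1_A h1 h2 hr, hB1eq]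
  have subE : ∀ (l' : List Page) (a : Page), a ∈ l'.erase x → a ∈ l' :=
    fun l' a ha => List.mem_of_mem_erase ha
  have subD : ∀ (l' : List Page) (a : Page), a ∈ l'.dropLast → a ∈ l' :=
    fun l' a ha => mem_of_mem_dropLast ha
  have hlB1 : l ∉ s.B1 := fun hm => d13 hlT1 hm
  have hlT2 : l ∉ s.T2 := fun hm => d12 hlT1 hm
  have hlB2 : l ∉ s.B2 := fun hm => d14 hlT1 hm
  have hxB2 : x ∉ s.B2 := fun hm => d34 h2 hm
  have hxc : x ∉ l :: s.B1.erase x := by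
    intro hm
    rcases List.mem_cons.mp hm with he | hm
    · exact hxT1 (he ▸ hlT1)
    · exact not_mem_erase_self nd3 x hm
  have hb1 : 1 ≤ s.B1.length := List.length_pos_iff.mpr (List.ne_nil_of_mem h2)
  have e1 : s.T1.dropLast.length = s.T1.length - 1 := List.length_dropLast
  have e3 : (l :: s.B1.erase x).length = s.B1.length := by
    simp only [List.length_cons, List.length_erase_of_mem h2]
    omega
  have hfull' : s.T1.length + s.T2.length = N := hfull (by omega)
  have hl1' : s.T1.length + s.B1.length ≤ N := hl1 hb1
  refine ⟨List.Nodup.sublist (List.dropLast_sublist _) nd1,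
    List.nodup_cons.mpr ⟨hxT2, nd2⟩,
    List.nodup_cons.mpr ⟨fun hm => hlB1 (subE _ _ hm), nd3.erase x⟩, nd4,
    ?_, ?_, ?_, ?_, ?_, ?_, min_le_right _ _, ?_, ?_, ?_, ?_⟩
  · exact disj_cons_right (fun hm => hxT1 (subD _ _ hm)) (disj_mono (subD _) (fun a h => h) d12)
  · exact disj_cons_right (getLast_not_mem_dropLast nd1 hne) (disj_mono (subD _) (subE _) d13)
  · exact disj_mono (subD _) (fun a h => h) d14
  · exact disj_cons_left hxc (disj_cons_right hlT2 (disj_mono (fun a h => h) (subE _) d23))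
  · exact disj_cons_left hxB2 d24
  · exact disj_cons_left hlB2 (disj_mono (subE _) (fun a h => h) d34)
  · dsimp only; intro _; exact hN0 (by omega)
  · dsimp only; intro h'; simp only [List.length_cons, e1, e3]; omega
  · dsimp only; intro h'; simp only [List.length_cons, e1, e3]; omega
  · dsimp only; intro h'; simp only [e1, e3]; omega

theorem inv_B1B {N : ℕ} {s : ArcState} {x : Page} (hInv : Inv N s)
    (h1 : ¬(x ∈ s.T1 ∨ x ∈ s.T2)) (h2 : x ∈ s.B1)
    (hr : ¬(1 ≤ s.T1.length ∧ min (s.p + 1) N < s.T1.length)) :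
    Inv N (arcStep N s x) := by
  obtain ⟨nd1, nd2, nd3, nd4, d12, d13, d14, d23, d24, d34, hp, hN0, ht, hfull, hl1⟩ := hInv
  have hxT1 : x ∉ s.T1 := fun h => h1 (Or.inl h)
  have hxT2 : x ∉ s.T2 := fun h => h1 (Or.inr h)
  have hb1 : 1 ≤ s.B1.length := List.length_pos_iff.mpr (List.ne_nil_of_mem h2)
  have hfull' : s.T1.length + s.T2.length = N := hfull (by omega)
  have hl1' : s.T1.length + s.B1.length ≤ N := hl1 hb1
  have ht2 : 1 ≤ s.T2.length := by omega
  have hne : s.T2 ≠ [] := by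
    intro he; rw [he] at ht2; simp at ht2
  set m := s.T2.getLast hne with hm
  have hmT2 : m ∈ s.T2 := List.getLast_mem hne
  have hB2eq : s.T2.getLast?.toList ++ s.B2 = m :: s.B2 := by
    rw [getLast?_toList_of_ne_nil _ hne, List.singleton_append]
  rw [arcStep_B1_B h1 h2 hr, hB2eq]
  have subE : ∀ (l' : List Page) (a : Page), a ∈ l'.erase x → a ∈ l' :=
    fun l' a ha => List.mem_of_mem_erase ha
  have subD : ∀ (l' : List Page) (a : Page), a ∈ l'.dropLast → a ∈ l' :=
    fun l' a ha => mem_of_mem_dropLast ha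
  have hmT1 : m ∉ s.T1 := fun hm' => d12 hm' hmT2
  have hmB1 : m ∉ s.B1 := fun hm' => d23 hmT2 hm'
  have hmB2 : m ∉ s.B2 := fun hm' => d24 hmT2 hm'
  have hxB2 : x ∉ s.B2 := fun hm' => d34 h2 hm'
  have e2 : (x :: s.T2.dropLast).length = s.T2.length := by
    simp only [List.length_cons, List.length_dropLast]
    omega
  have e3 : (s.B1.erase x).length = s.B1.length - 1 := List.length_erase_of_mem h2
  refine ⟨nd1,
    List.nodup_cons.mpr ⟨fun hm' => hxT2 (subD _ _ hm'),
      List.Nodup.sublist (List.dropLast_sublist _) nd2⟩,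
    nd3.erase x,
    List.nodup_cons.mpr ⟨hmB2, nd4⟩,
    ?_, ?_, ?_, ?_, ?_, ?_, min_le_right _ _, ?_, ?_, ?_, ?_⟩
  · exact disj_cons_right hxT1 (disj_mono (fun a h => h) (subD _) d12)
  · exact disj_mono (fun a h => h) (subE _) d13
  · exact disj_cons_right hmT1 d14
  · refine disj_cons_left (not_mem_erase_self nd3 x) (disj_mono (subD _) (subE _) d23)
  · refine disj_cons_left ?_ (disj_cons_right (getLast_not_mem_dropLast nd2 hne)
      (disj_mono (subD _) (fun a h => h) d24))
    intro hm'
    rcases List.mem_cons.mp hm' with he | hm'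
    · exact hxT2 (he ▸ hmT2)
    · exact hxB2 hm'
  · exact disj_cons_right (fun hm' => hmB1 (subE _ _ hm'))
      (disj_mono (subE _) (fun a h => h) d34)
  · dsimp only; intro _; exact hN0 (by omega)
  · dsimp only; intro h'; simp only [e2]; omega
  · dsimp only; intro h'; simp only [e2]; omega
  · dsimp only; intro h'; simp only [e3] at h' ⊢; omega

end ArcInvNS

namespace ArcInvNS
open StructAux

theorem inv_B2A {N : ℕ} {s : ArcState} {x : Page} (hInv : Inv N s)
    (h1 : ¬(x ∈ s.T1 ∨ x ∈ s.T2)) (h2 : x ∉ s.B1) (h3 : x ∈ s.B2)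
    (hr : 1 ≤ s.T1.length ∧ (s.T1.length = s.p - 1 ∨ s.p - 1 < s.T1.length)) :
    Inv N (arcStep N s x) := by
  obtain ⟨nd1, nd2, nd3, nd4, d12, d13, d14, d23, d24, d34, hp, hN0, ht, hfull, hl1⟩ := hInv
  have hxT1 : x ∉ s.T1 := fun h => h1 (Or.inl h)
  have hxT2 : x ∉ s.T2 := fun h => h1 (Or.inr h)
  have hne : s.T1 ≠ [] := by intro he; rw [he] at hr; simp at hr
  set l := s.T1.getLast hne with hl
  have hlT1 : l ∈ s.T1 := List.getLast_mem hne
  have hB1eq : s.T1.getLast?.toList ++ s.B1 = l :: s.B1 := by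
    rw [getLast?_toList_of_ne_nil _ hne, List.singleton_append]
  rw [arcStep_B2_A h1 h2 h3 hr, hB1eq]
  have subE : ∀ (l' : List Page) (a : Page), a ∈ l'.erase x → a ∈ l' :=
    fun l' a ha => List.mem_of_mem_erase ha
  have subD : ∀ (l' : List Page) (a : Page), a ∈ l'.dropLast → a ∈ l' :=
    fun l' a ha => mem_of_mem_dropLast ha
  have hlB1 : l ∉ s.B1 := fun hm => d13 hlT1 hm
  have hlT2 : l ∉ s.T2 := fun hm => d12 hlT1 hm
  have hlB2 : l ∉ s.B2 := fun hm => d14 hlT1 hm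
  have hb2 : 1 ≤ s.B2.length := List.length_pos_iff.mpr (List.ne_nil_of_mem h3)
  have hfull' : s.T1.length + s.T2.length = N := hfull (by omega)
  have e1 : s.T1.dropLast.length = s.T1.length - 1 := List.length_dropLast
  have e4 : (s.B2.erase x).length = s.B2.length - 1 := List.length_erase_of_mem h3
  refine ⟨List.Nodup.sublist (List.dropLast_sublist _) nd1,
    List.nodup_cons.mpr ⟨hxT2, nd2⟩,
    List.nodup_cons.mpr ⟨hlB1, nd3⟩, nd4.erase x,
    ?_, ?_, ?_, ?_, ?_, ?_, by dsimp only; omega, ?_, ?_, ?_, ?_⟩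
  · exact disj_cons_right (fun hm => hxT1 (subD _ _ hm)) (disj_mono (subD _) (fun a h => h) d12)
  · exact disj_cons_right (getLast_not_mem_dropLast nd1 hne)
      (disj_mono (subD _) (fun a h => h) d13)
  · exact disj_mono (subD _) (subE _) d14
  · refine disj_cons_left ?_ (disj_cons_right hlT2 d23)
    intro hm
    rcases List.mem_cons.mp hm with he | hm
    · exact hxT1 (he ▸ hlT1)
    · exact h2 hm
  · exact disj_cons_left (not_mem_erase_self nd4 x) (disj_mono (fun a h => h) (subE _) d24)
  · exact disj_cons_left (fun hm => hlB2 (subE _ _ hm)) (disj_mono (fun a h => h) (subE _) d34)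
  · dsimp only; intro h'; exact hN0 (by omega)
  · dsimp only; intro h'; simp only [List.length_cons, e1]; omega
  · dsimp only; intro h'; simp only [List.length_cons, e1, e4]; omega
  · dsimp only
    intro h'
    simp only [List.length_cons, e1] at h' ⊢
    by_cases hb1 : 1 ≤ s.B1.length
    · have := hl1 hb1; omega
    · omega

theorem inv_B2B {N : ℕ} {s : ArcState} {x : Page} (hInv : Inv N s)
    (h1 : ¬(x ∈ s.T1 ∨ x ∈ s.T2)) (h2 : x ∉ s.B1) (h3 : x ∈ s.B2)
    (hr : ¬(1 ≤ s.T1.length ∧ (s.T1.length = s.p - 1 ∨ s.p - 1 < s.T1.length))) :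
    Inv N (arcStep N s x) := by
  obtain ⟨nd1, nd2, nd3, nd4, d12, d13, d14, d23, d24, d34, hp, hN0, ht, hfull, hl1⟩ := hInv
  have hxT1 : x ∉ s.T1 := fun h => h1 (Or.inl h)
  have hxT2 : x ∉ s.T2 := fun h => h1 (Or.inr h)
  have hb2 : 1 ≤ s.B2.length := List.length_pos_iff.mpr (List.ne_nil_of_mem h3)
  have hN1 : 1 ≤ N := hN0 (by omega)
  have hfull' : s.T1.length + s.T2.length = N := hfull (by omega)
  have ht2 : 1 ≤ s.T2.length := by
    by_contra h'
    exact hr ⟨by omega, Or.inr (by omega)⟩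
  have hne : s.T2 ≠ [] := by intro he; rw [he] at ht2; simp at ht2
  set m := s.T2.getLast hne with hm
  have hmT2 : m ∈ s.T2 := List.getLast_mem hne
  have hmx : ¬ m = x := fun he => hxT2 (he ▸ hmT2)
  have hB2eq : (s.T2.getLast?.toList ++ s.B2).erase x = m :: s.B2.erase x := by
    rw [getLast?_toList_of_ne_nil _ hne, List.singleton_append,
      List.erase_cons_tail (by simp; exact hmx)]
  rw [arcStep_B2_B h1 h2 h3 hr, hB2eq]
  have subE : ∀ (l' : List Page) (a : Page), a ∈ l'.erase x → a ∈ l' :=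
    fun l' a ha => List.mem_of_mem_erase ha
  have subD : ∀ (l' : List Page) (a : Page), a ∈ l'.dropLast → a ∈ l' :=
    fun l' a ha => mem_of_mem_dropLast ha
  have hmT1 : m ∉ s.T1 := fun hm' => d12 hm' hmT2
  have hmB1 : m ∉ s.B1 := fun hm' => d23 hmT2 hm'
  have hmB2 : m ∉ s.B2 := fun hm' => d24 hmT2 hm'
  have e2 : (x :: s.T2.dropLast).length = s.T2.length := by
    simp only [List.length_cons, List.length_dropLast]; omega
  have e4 : (m :: s.B2.erase x).length = s.B2.length := by
    simp only [List.length_cons, List.length_erase_of_mem h3]; omega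
  refine ⟨nd1,
    List.nodup_cons.mpr ⟨fun hm' => hxT2 (subD _ _ hm'),
      List.Nodup.sublist (List.dropLast_sublist _) nd2⟩, nd3,
    List.nodup_cons.mpr ⟨fun hm' => hmB2 (subE _ _ hm'), nd4.erase x⟩,
    ?_, ?_, ?_, ?_, ?_, ?_, by dsimp only; omega, ?_, ?_, ?_, ?_⟩
  · exact disj_cons_right hxT1 (disj_mono (fun a h => h) (subD _) d12)
  · exact d13
  · refine disj_cons_right hmT1 (disj_mono (fun a h => h) (subE _) d14)
  · exact disj_cons_left h2 (disj_mono (subD _) (fun a h => h) d23)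
  · refine disj_cons_left ?_ (disj_cons_right (getLast_not_mem_dropLast nd2 hne)
      (disj_mono (subD _) (subE _) d24))
    intro hm'
    rcases List.mem_cons.mp hm' with he | hm'
    · exact hxT2 (he ▸ hmT2)
    · exact not_mem_erase_self nd4 x hm'
  · exact disj_cons_right hmB1 (disj_mono (fun a h => h) (subE _) d34)
  · dsimp only; intro _; omega
  · dsimp only; intro h'; simp only [e2]; omega
  · dsimp only; intro h'; simp only [e2, e4] at h' ⊢; omega
  · intro h'; exact hl1 h'

theorem inv_M1A {N : ℕ} {s : ArcState} {x : Page} (hInv : Inv N s)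
    (h1 : ¬(x ∈ s.T1 ∨ x ∈ s.T2)) (h2 : x ∉ s.B1) (h3 : x ∉ s.B2)
    (hN : s.T1.length + s.B1.length = N) (hlt : s.T1.length < N)
    (hr : 1 ≤ s.T1.length ∧ s.p < s.T1.length) :
    Inv N (arcStep N s x) := by
  obtain ⟨nd1, nd2, nd3, nd4, d12, d13, d14, d23, d24, d34, hp, hN0, ht, hfull, hl1⟩ := hInv
  have hxT1 : x ∉ s.T1 := fun h => h1 (Or.inl h)
  have hxT2 : x ∉ s.T2 := fun h => h1 (Or.inr h)
  have hne : s.T1 ≠ [] := by intro he; rw [he] at hr; simp at hr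
  set l := s.T1.getLast hne with hl
  have hlT1 : l ∈ s.T1 := List.getLast_mem hne
  have hB1eq : s.T1.getLast?.toList ++ s.B1.dropLast = l :: s.B1.dropLast := by
    rw [getLast?_toList_of_ne_nil _ hne, List.singleton_append]
  rw [arcStep_M1A h1 h2 h3 hN hlt hr, hB1eq]
  have subD : ∀ (l' : List Page) (a : Page), a ∈ l'.dropLast → a ∈ l' :=
    fun l' a ha => mem_of_mem_dropLast ha
  have hlB1 : l ∉ s.B1 := fun hm => d13 hlT1 hm
  have hlT2 : l ∉ s.T2 := fun hm => d12 hlT1 hm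
  have hlB2 : l ∉ s.B2 := fun hm => d14 hlT1 hm
  have hb1 : 1 ≤ s.B1.length := by omega
  have hfull' : s.T1.length + s.T2.length = N := hfull (by omega)
  have e1 : (x :: s.T1.dropLast).length = s.T1.length := by
    simp only [List.length_cons, List.length_dropLast]; omega
  have e3 : (l :: s.B1.dropLast).length = s.B1.length := by
    simp only [List.length_cons, List.length_dropLast]; omega
  refine ⟨List.nodup_cons.mpr ⟨fun hm => hxT1 (subD _ _ hm),
      List.Nodup.sublist (List.dropLast_sublist _) nd1⟩, nd2,
    List.nodup_cons.mpr ⟨fun hm => hlB1 (subD _ _ hm),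
      List.Nodup.sublist (List.dropLast_sublist _) nd3⟩, nd4,
    ?_, ?_, ?_, ?_, ?_, ?_, by dsimp only; omega, ?_, ?_, ?_, ?_⟩
  · exact disj_cons_left hxT2 (disj_mono (subD _) (fun a h => h) d12)
  · refine disj_cons_left ?_ (disj_cons_right (getLast_not_mem_dropLast nd1 hne)
      (disj_mono (subD _) (subD _) d13))
    intro hm
    rcases List.mem_cons.mp hm with he | hm
    · exact hxT1 (he ▸ hlT1)
    · exact h2 (subD _ _ hm)
  · exact disj_cons_left h3 (disj_mono (subD _) (fun a h => h) d14)
  · exact disj_cons_right hlT2 (disj_mono (fun a h => h) (subD _) d23)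
  · exact d24
  · exact disj_cons_left hlB2 (disj_mono (subD _) (fun a h => h) d34)
  · dsimp only; intro h'; exact hN0 (by omega)
  · dsimp only; intro h'; simp only [e1]; omega
  · dsimp only; intro h'; simp only [e1, e3]; omega
  · dsimp only; intro h'; simp only [e1, e3]; omega

theorem inv_M1B {N : ℕ} {s : ArcState} {x : Page} (hInv : Inv N s)
    (h1 : ¬(x ∈ s.T1 ∨ x ∈ s.T2)) (h2 : x ∉ s.B1) (h3 : x ∉ s.B2)
    (hN : s.T1.length + s.B1.length = N) (hlt : s.T1.length < N)
    (hr : ¬(1 ≤ s.T1.length ∧ s.p < s.T1.length)) :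
    Inv N (arcStep N s x) := by
  obtain ⟨nd1, nd2, nd3, nd4, d12, d13, d14, d23, d24, d34, hp, hN0, ht, hfull, hl1⟩ := hInv
  have hxT1 : x ∉ s.T1 := fun h => h1 (Or.inl h)
  have hxT2 : x ∉ s.T2 := fun h => h1 (Or.inr h)
  have hb1 : 1 ≤ s.B1.length := by omega
  have hfull' : s.T1.length + s.T2.length = N := hfull (by omega)
  have ht2 : 1 ≤ s.T2.length := by omega
  have hne : s.T2 ≠ [] := by intro he; rw [he] at ht2; simp at ht2
  set m := s.T2.getLast hne with hm
  have hmT2 : m ∈ s.T2 := List.getLast_mem hne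
  have hB2eq : s.T2.getLast?.toList ++ s.B2 = m :: s.B2 := by
    rw [getLast?_toList_of_ne_nil _ hne, List.singleton_append]
  rw [arcStep_M1B h1 h2 h3 hN hlt hr, hB2eq]
  have subD : ∀ (l' : List Page) (a : Page), a ∈ l'.dropLast → a ∈ l' :=
    fun l' a ha => mem_of_mem_dropLast ha
  have hmT1 : m ∉ s.T1 := fun hm' => d12 hm' hmT2
  have hmB1 : m ∉ s.B1 := fun hm' => d23 hmT2 hm'
  have hmB2 : m ∉ s.B2 := fun hm' => d24 hmT2 hm'
  have e1 : (x :: s.T1).length = s.T1.length + 1 := List.length_cons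
  have e2 : s.T2.dropLast.length = s.T2.length - 1 := List.length_dropLast
  have e3 : s.B1.dropLast.length = s.B1.length - 1 := List.length_dropLast
  have e4 : (m :: s.B2).length = s.B2.length + 1 := List.length_cons
  refine ⟨List.nodup_cons.mpr ⟨hxT1, nd1⟩,
    List.Nodup.sublist (List.dropLast_sublist _) nd2,
    List.Nodup.sublist (List.dropLast_sublist _) nd3,
    List.nodup_cons.mpr ⟨hmB2, nd4⟩,
    ?_, ?_, ?_, ?_, ?_, ?_, by dsimp only; omega, ?_, ?_, ?_, ?_⟩
  · exact disj_cons_left (fun hm' => hxT2 (subD _ _ hm'))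
      (disj_mono (fun a h => h) (subD _) d12)
  · exact disj_cons_left (fun hm' => h2 (subD _ _ hm'))
      (disj_mono (fun a h => h) (subD _) d13)
  · refine disj_cons_left ?_ (disj_cons_right hmT1 d14)
    intro hm'
    rcases List.mem_cons.mp hm' with he | hm'
    · exact hxT2 (he ▸ hmT2)
    · exact h3 hm'
  · exact disj_mono (subD _) (subD _) d23
  · refine disj_cons_right (getLast_not_mem_dropLast nd2 hne)
      (disj_mono (subD _) (fun a h => h) d24)
  · exact disj_cons_right (fun hm' => hmB1 (subD _ _ hm'))
      (disj_mono (subD _) (fun a h => h) d34)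
  · dsimp only; intro h'; exact hN0 (by omega)
  · dsimp only; intro h'; simp only [e1, e2]; omega
  · dsimp only; intro h'; simp only [e1, e2, e3, e4]; omega
  · dsimp only; intro h'; simp only [e1, e3] at h' ⊢; omega

theorem inv_M2 {N : ℕ} {s : ArcState} {x : Page} (hInv : Inv N s)
    (h1 : ¬(x ∈ s.T1 ∨ x ∈ s.T2)) (h2 : x ∉ s.B1) (h3 : x ∉ s.B2)
    (hN : s.T1.length + s.B1.length = N) (hlt : ¬ s.T1.length < N) :
    Inv N (arcStep N s x) := by
  obtain ⟨nd1, nd2, nd3, nd4, d12, d13, d14, d23, d24, d34, hp, hN0, ht, hfull, hl1⟩ := hInv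
  have hxT1 : x ∉ s.T1 := fun h => h1 (Or.inl h)
  have hxT2 : x ∉ s.T2 := fun h => h1 (Or.inr h)
  rw [arcStep_M2 h1 h2 h3 hN hlt]
  have subD : ∀ (l' : List Page) (a : Page), a ∈ l'.dropLast → a ∈ l' :=
    fun l' a ha => mem_of_mem_dropLast ha
  have e1 : (x :: s.T1.dropLast).length = s.T1.length - 1 + 1 := by
    simp only [List.length_cons, List.length_dropLast]
  have hb1 : s.B1.length = 0 := by omega
  refine ⟨List.nodup_cons.mpr ⟨fun hm => hxT1 (subD _ _ hm),
      List.Nodup.sublist (List.dropLast_sublist _) nd1⟩, nd2, nd3, nd4,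
    ?_, ?_, ?_, d23, d24, d34, hp, ?_, ?_, ?_, ?_⟩
  · exact disj_cons_left hxT2 (disj_mono (subD _) (fun a h => h) d12)
  · exact disj_cons_left h2 (disj_mono (subD _) (fun a h => h) d13)
  · exact disj_cons_left h3 (disj_mono (subD _) (fun a h => h) d14)
  · dsimp only; intro h'; exact hN0 (by omega)
  · dsimp only
    intro h'
    have h1' := ht h'
    have h2' : s.B1.length + s.B2.length = 0 ∨ s.T1.length + s.T2.length = N := by
      by_cases hb : 1 ≤ s.B1.length + s.B2.length
      · exact Or.inr (hfull hb)
      · omega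
    simp only [e1]
    omega
  · dsimp only
    intro h'
    have hN1 : 1 ≤ N := hN0 (by omega)
    have h1' := ht hN1
    have h2' := hfull (by omega)
    simp only [e1]
    omega
  · dsimp only; intro h'; simp only [e1]; omega

theorem inv_M3A {N : ℕ} {s : ArcState} {x : Page} (hInv : Inv N s)
    (h1 : ¬(x ∈ s.T1 ∨ x ∈ s.T2)) (h2 : x ∉ s.B1) (h3 : x ∉ s.B2)
    (hN : ¬ s.T1.length + s.B1.length = N)
    (hc2 : s.T1.length + s.B1.length < N ∧
      N ≤ s.T1.length + s.T2.length + s.B1.length + s.B2.length)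
    (hr : 1 ≤ s.T1.length ∧ s.p < s.T1.length) :
    Inv N (arcStep N s x) := by
  obtain ⟨nd1, nd2, nd3, nd4, d12, d13, d14, d23, d24, d34, hp, hN0, ht, hfull, hl1⟩ := hInv
  have hxT1 : x ∉ s.T1 := fun h => h1 (Or.inl h)
  have hxT2 : x ∉ s.T2 := fun h => h1 (Or.inr h)
  have hne : s.T1 ≠ [] := by intro he; rw [he] at hr; simp at hr
  set l := s.T1.getLast hne with hl
  have hlT1 : l ∈ s.T1 := List.getLast_mem hne
  have hB1eq : s.T1.getLast?.toList ++ s.B1 = l :: s.B1 := by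
    rw [getLast?_toList_of_ne_nil _ hne, List.singleton_append]
  rw [arcStep_M3A h1 h2 h3 hN hc2 hr, hB1eq]
  set B2' := if s.T1.length + s.T2.length + s.B1.length + s.B2.length = 2 * N then
    s.B2.dropLast else s.B2 with hB2'
  have hsub : ∀ a ∈ B2', a ∈ s.B2 := by
    rw [hB2']; split
    · exact fun a ha => mem_of_mem_dropLast ha
    · exact fun a ha => ha
  have hnd4' : B2'.Nodup := by
    rw [hB2']; split
    · exact List.Nodup.sublist (List.dropLast_sublist _) nd4
    · exact nd4
  have subD : ∀ (l' : List Page) (a : Page), a ∈ l'.dropLast → a ∈ l' :=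
    fun l' a ha => mem_of_mem_dropLast ha
  have hlB1 : l ∉ s.B1 := fun hm => d13 hlT1 hm
  have hlT2 : l ∉ s.T2 := fun hm => d12 hlT1 hm
  have hlB2 : l ∉ s.B2 := fun hm => d14 hlT1 hm
  have hN1 : 1 ≤ N := by omega
  have hfull' : s.T1.length + s.T2.length = N := by
    have h1' := ht hN1
    by_cases hb : 1 ≤ s.B1.length + s.B2.length
    · exact hfull hb
    · omega
  have e1 : (x :: s.T1.dropLast).length = s.T1.length := by
    simp only [List.length_cons, List.length_dropLast]; omega
  have e3 : (l :: s.B1).length = s.B1.length + 1 := List.length_cons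
  refine ⟨List.nodup_cons.mpr ⟨fun hm => hxT1 (subD _ _ hm),
      List.Nodup.sublist (List.dropLast_sublist _) nd1⟩, nd2,
    List.nodup_cons.mpr ⟨hlB1, nd3⟩, hnd4',
    ?_, ?_, ?_, ?_, ?_, ?_, hp, ?_, ?_, ?_, ?_⟩
  · exact disj_cons_left hxT2 (disj_mono (subD _) (fun a h => h) d12)
  · refine disj_cons_left ?_ (disj_cons_right (getLast_not_mem_dropLast nd1 hne)
      (disj_mono (subD _) (fun a h => h) d13))
    intro hm
    rcases List.mem_cons.mp hm with he | hm
    · exact hxT1 (he ▸ hlT1)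
    · exact h2 hm
  · exact disj_cons_left (fun hm => h3 (hsub _ hm))
      (disj_mono (subD _) hsub d14)
  · exact disj_cons_right hlT2 d23
  · exact disj_mono (fun a h => h) hsub d24
  · exact disj_cons_left (fun hm => hlB2 (hsub _ hm)) (disj_mono (fun a h => h) hsub d34)
  · dsimp only; intro _; exact hN1
  · dsimp only; intro h'; simp only [e1]; omega
  · dsimp only; intro h'; simp only [e1]; omega
  · dsimp only; intro h'; simp only [e1, e3]; omega

theorem inv_M3B {N : ℕ} {s : ArcState} {x : Page} (hInv : Inv N s)
    (h1 : ¬(x ∈ s.T1 ∨ x ∈ s.T2)) (h2 : x ∉ s.B1) (h3 : x ∉ s.B2)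
    (hN : ¬ s.T1.length + s.B1.length = N)
    (hc2 : s.T1.length + s.B1.length < N ∧
      N ≤ s.T1.length + s.T2.length + s.B1.length + s.B2.length)
    (hr : ¬(1 ≤ s.T1.length ∧ s.p < s.T1.length)) :
    Inv N (arcStep N s x) := by
  obtain ⟨nd1, nd2, nd3, nd4, d12, d13, d14, d23, d24, d34, hp, hN0, ht, hfull, hl1⟩ := hInv
  have hxT1 : x ∉ s.T1 := fun h => h1 (Or.inl h)
  have hxT2 : x ∉ s.T2 := fun h => h1 (Or.inr h)
  have hN1 : 1 ≤ N := by omega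
  have hfull' : s.T1.length + s.T2.length = N := by
    have h1' := ht hN1
    by_cases hb : 1 ≤ s.B1.length + s.B2.length
    · exact hfull hb
    · omega
  have ht2 : 1 ≤ s.T2.length := by omega
  have hne : s.T2 ≠ [] := by intro he; rw [he] at ht2; simp at ht2
  set m := s.T2.getLast hne with hm
  have hmT2 : m ∈ s.T2 := List.getLast_mem hne
  have hB2eq : s.T2.getLast?.toList = [m] := getLast?_toList_of_ne_nil _ hne
  rw [arcStep_M3B h1 h2 h3 hN hc2 hr, hB2eq]
  set B2' := if s.T1.length + s.T2.length + s.B1.length + s.B2.length = 2 * N then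
    s.B2.dropLast else s.B2 with hB2'
  have hsub : ∀ a ∈ B2', a ∈ s.B2 := by
    rw [hB2']; split
    · exact fun a ha => mem_of_mem_dropLast ha
    · exact fun a ha => ha
  have hnd4' : B2'.Nodup := by
    rw [hB2']; split
    · exact List.Nodup.sublist (List.dropLast_sublist _) nd4
    · exact nd4
  have hlen4 : B2'.length ≤ s.B2.length := by
    rw [hB2']; split
    · rw [List.length_dropLast]; omega
    · omega
  have subD : ∀ (l' : List Page) (a : Page), a ∈ l'.dropLast → a ∈ l' :=
    fun l' a ha => mem_of_mem_dropLast ha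
  have hmT1 : m ∉ s.T1 := fun hm' => d12 hm' hmT2
  have hmB1 : m ∉ s.B1 := fun hm' => d23 hmT2 hm'
  have hmB2 : m ∉ s.B2 := fun hm' => d24 hmT2 hm'
  have hms : [m] ++ B2' = m :: B2' := List.singleton_append
  rw [hms]
  have e2 : s.T2.dropLast.length = s.T2.length - 1 := List.length_dropLast
  refine ⟨List.nodup_cons.mpr ⟨hxT1, nd1⟩,
    List.Nodup.sublist (List.dropLast_sublist _) nd2, nd3,
    List.nodup_cons.mpr ⟨fun hm' => hmB2 (hsub _ hm'), hnd4'⟩,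
    ?_, ?_, ?_, ?_, ?_, ?_, hp, ?_, ?_, ?_, ?_⟩
  · exact disj_cons_left (fun hm' => hxT2 (subD _ _ hm'))
      (disj_mono (fun a h => h) (subD _) d12)
  · exact disj_cons_left h2 d13
  · refine disj_cons_left ?_ (disj_cons_right hmT1 (disj_mono (fun a h => h) hsub d14))
    intro hm'
    rcases List.mem_cons.mp hm' with he | hm'
    · exact hxT2 (he ▸ hmT2)
    · exact h3 (hsub _ hm')
  · exact disj_mono (subD _) (fun a h => h) d23
  · exact disj_cons_right (getLast_not_mem_dropLast nd2 hne)
      (disj_mono (subD _) hsub d24)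
  · exact disj_cons_right hmB1 (disj_mono (fun a h => h) hsub d34)
  · dsimp only; intro _; exact hN1
  · dsimp only; intro h'; simp only [List.length_cons, e2]; omega
  · dsimp only; intro h'; simp only [List.length_cons, e2]; omega
  · dsimp only; intro h'; simp only [List.length_cons]; omega

theorem inv_M4 {N : ℕ} {s : ArcState} {x : Page} (hInv : Inv N s)
    (h1 : ¬(x ∈ s.T1 ∨ x ∈ s.T2)) (h2 : x ∉ s.B1) (h3 : x ∉ s.B2)
    (hN : ¬ s.T1.length + s.B1.length = N)
    (hc2 : ¬(s.T1.length + s.B1.length < N ∧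
      N ≤ s.T1.length + s.T2.length + s.B1.length + s.B2.length)) :
    Inv N (arcStep N s x) := by
  obtain ⟨nd1, nd2, nd3, nd4, d12, d13, d14, d23, d24, d34, hp, hN0, ht, hfull, hl1⟩ := hInv
  have hxT1 : x ∉ s.T1 := fun h => h1 (Or.inl h)
  have hxT2 : x ∉ s.T2 := fun h => h1 (Or.inr h)
  rw [arcStep_M4 h1 h2 h3 hN hc2]
  have hb0 : s.B1.length + s.B2.length = 0 := by
    by_contra hb
    have hN1 : 1 ≤ N := hN0 (by omega)
    have hfull' := hfull (by omega)
    have h1' := ht hN1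
    have hl1' : s.B1.length = 0 ∨ s.T1.length + s.B1.length ≤ N := by
      by_cases hb1 : 1 ≤ s.B1.length
      · exact Or.inr (hl1 hb1)
      · omega
    omega
  refine ⟨List.nodup_cons.mpr ⟨hxT1, nd1⟩, nd2, nd3, nd4,
    disj_cons_left hxT2 d12, disj_cons_left h2 d13, disj_cons_left h3 d14,
    d23, d24, d34, hp, ?_, ?_, ?_, ?_⟩
  · dsimp only; intro h'; omega
  · dsimp only
    intro h'
    have h1' := ht h'
    simp only [List.length_cons]
    omega
  · dsimp only; intro h'; omega
  · dsimp only; intro h'; omega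

end ArcInvNS

namespace ArcInvNS

theorem inv_step {N : ℕ} {s : ArcState} (x : Page) (hInv : Inv N s) :
    Inv N (arcStep N s x) := by
  by_cases h1 : x ∈ s.T1 ∨ x ∈ s.T2
  · exact inv_hit hInv h1
  by_cases h2 : x ∈ s.B1
  · by_cases hr : 1 ≤ s.T1.length ∧ min (s.p + 1) N < s.T1.length
    · exact inv_B1A hInv h1 h2 hr
    · exact inv_B1B hInv h1 h2 hr
  by_cases h3 : x ∈ s.B2
  · by_cases hr : 1 ≤ s.T1.length ∧ (s.T1.length = s.p - 1 ∨ s.p - 1 < s.T1.length)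
    · exact inv_B2A hInv h1 h2 h3 hr
    · exact inv_B2B hInv h1 h2 h3 hr
  by_cases hN : s.T1.length + s.B1.length = N
  · by_cases hlt : s.T1.length < N
    · by_cases hr : 1 ≤ s.T1.length ∧ s.p < s.T1.length
      · exact inv_M1A hInv h1 h2 h3 hN hlt hr
      · exact inv_M1B hInv h1 h2 h3 hN hlt hr
    · exact inv_M2 hInv h1 h2 h3 hN hlt
  by_cases hc2 : s.T1.length + s.B1.length < N ∧
      N ≤ s.T1.length + s.T2.length + s.B1.length + s.B2.length
  · by_cases hr : 1 ≤ s.T1.length ∧ s.p < s.T1.length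
    · exact inv_M3A hInv h1 h2 h3 hN hc2 hr
    · exact inv_M3B hInv h1 h2 h3 hN hc2 hr
  · exact inv_M4 hInv h1 h2 h3 hN hc2

theorem inv_run {N : ℕ} : ∀ (l : List Page) (s : ArcState), Inv N s →
    Inv N (arcRun N s l)
  | [], s, h => h
  | x :: l, s, h => by
    rw [arcRun]
    exact inv_run l _ (inv_step x h)

theorem inv_arcRun_init (N : ℕ) (l : List Page) : Inv N (arcRun N ArcState.init l) :=
  inv_run l _ (inv_init N)

end ArcInvNS

/-- Case II. In the parallel execution of ARC and OPT,
after phase `P(0)`, when ARC misses on `σ_j` and the requested page is in `B1`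
(so `p` becomes `min (p+1) N`, REPLACE is called, and the page moves to
`MRU(T2)`), the change of `Φ = p − [(b₁'−t) + 2(t₁'−t) + 3(b₂'−t) + 4(t₂'−t)]`
(w.r.t. OPT's cache `C (j+1)`) satisfies `ΔΦ ≤ −1`; more precisely `ΔΦ ≤ −1`
if the page is in `B1'` and `ΔΦ ≤ −2` if the page is in `B1 − B1'`. -/
theorem arc_b1_miss_potential (N : ℕ) (σ : List Page) (C : ℕ → Finset Page)
    (hC : OptExec N σ C) (hCopt : optFaults σ C = optCost N σ)
    (j : ℕ) (hj : j < σ.length)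
    (hphase : N ≤ arcCost N ArcState.init (σ.take j))
    (s : ArcState) (hs : s = arcRun N ArcState.init (σ.take j))
    (hmiss : σ.getD j 0 ∉ s.T1 ∧ σ.getD j 0 ∉ s.T2)
    (hB1 : σ.getD j 0 ∈ s.B1) :
    arcPhi (arcStep N s (σ.getD j 0)) (C (j + 1)) - arcPhi s (C (j + 1)) ≤ -1 ∧
    (σ.getD j 0 ∈ (s.T1 ++ s.B1).takeWhile (fun r => decide (r ∈ C (j + 1))) →
      arcPhi (arcStep N s (σ.getD j 0)) (C (j + 1)) - arcPhi s (C (j + 1)) ≤ -1) ∧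
    (σ.getD j 0 ∉ (s.T1 ++ s.B1).takeWhile (fun r => decide (r ∈ C (j + 1))) →
      arcPhi (arcStep N s (σ.getD j 0)) (C (j + 1)) - arcPhi s (C (j + 1)) ≤ -2) := by
  obtain ⟨hC0, hCcard, hCstep⟩ := hC
  set x := σ.getD j 0 with hxdef
  set O := C (j + 1) with hOdef
  have hxO : x ∈ O := (hCstep j hj).1
  have hInv : ArcInvNS.Inv N s := hs ▸ ArcInvNS.inv_arcRun_init N (σ.take j)
  obtain ⟨nd1, nd2, nd3, nd4, d12, d13, d14, d23, d24, d34, hp, hN0, ht, hfull, hl1⟩ := hInv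
  obtain ⟨hxT1, hxT2⟩ := hmiss
  have h1or : ¬(x ∈ s.T1 ∨ x ∈ s.T2) := by
    rintro (h | h)
    · exact hxT1 h
    · exact hxT2 h
  have hb1 : 1 ≤ s.B1.length := List.length_pos_iff.mpr (List.ne_nil_of_mem hB1)
  have hfull' : s.T1.length + s.T2.length = N := hfull (by omega)
  have hl1' : s.T1.length + s.B1.length ≤ N := hl1 hb1
  have hxB2 : x ∉ s.B2 := fun h => d34 hB1 h
  have hPx : (fun q : Page => decide (q ∈ O)) x = true := decide_eq_true hxO
  have hΔp : min (s.p + 1) N ≤ s.p + 1 := min_le_left _ _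
  -- the main estimate, with the `-2` case when `x` is not in `TOP(L1)`
  have main : ∀ cc : ℤ,
      (x ∈ (s.T1 ++ s.B1).takeWhile (fun r => decide (r ∈ O)) → cc = 1) →
      (x ∉ (s.T1 ++ s.B1).takeWhile (fun r => decide (r ∈ O)) → cc = 2) →
      arcPhi (arcStep N s x) O - arcPhi s O ≤ -cc := by
    intro cc hcc1 hcc2
    by_cases hrep : 1 ≤ s.T1.length ∧ min (s.p + 1) N < s.T1.length
    · -- REPLACE demotes LRU(T1)
      have hne : s.T1 ≠ [] := by intro he; rw [he] at hrep; simp at hrep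
      set l := s.T1.getLast hne with hldef
      have hlT1 : l ∈ s.T1 := List.getLast_mem hne
      have hB1eq : (s.T1.getLast?.toList ++ s.B1).erase x = l :: s.B1.erase x := by
        rw [StructAux.getLast?_toList_of_ne_nil _ hne, List.singleton_append,
          List.erase_cons_tail (by simp; intro he; exact hxT1 (he ▸ hlT1))]
      have hstep : arcStep N s x = ⟨s.T1.dropLast, x :: s.T2,
          l :: s.B1.erase x, s.B2, min (s.p + 1) N⟩ := by
        rw [ArcInvNS.arcStep_B1_A h1or hB1 hrep, hB1eq]
      set D := s.T1.dropLast with hDdef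
      have hT1 : s.T1 = D ++ [l] := (List.dropLast_append_getLast hne).symm
      have hDlen : D.length + 1 = s.T1.length := by
        rw [hT1]; simp
      have hL1 := Branch2.branchA_L1 (fun q : Page => decide (q ∈ O)) D s.B1 l x
        (hT1 ▸ nd1) (fun a ha hb => d13 (hT1 ▸ ha) hb) hB1 hPx (hT1 ▸ hxT1)
      have hL2 := Branch2.branchA_L2 (fun q : Page => decide (q ∈ O)) s.T2 s.B2 x hxB2 hPx
      rw [hstep]
      simp only [arcPhi, arcPhiAt, arcT, arcB1', arcB2', arcT1', arcT2', topLen]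
      rw [hT1] at hcc1 hcc2 ⊢
      by_cases hxW : x ∈ ((D ++ [l]) ++ s.B1).takeWhile (fun r => decide (r ∈ O))
      · rw [hcc1 hxW] at *
        rw [if_pos hxW] at hL1
        simp only [List.length_cons, List.length_append, List.length_nil]
        have hdp : min (s.p + 1) N ≤ s.p + 1 := min_le_left _ _
        generalize min (s.p + 1) N = pn at hdp ⊢
        push_cast
        omega
      · rw [hcc2 hxW] at *
        rw [if_neg hxW] at hL1
        simp only [List.length_cons, List.length_append, List.length_nil]
        have hdp : min (s.p + 1) N ≤ s.p + 1 := min_le_left _ _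
        generalize min (s.p + 1) N = pn at hdp ⊢
        push_cast
        omega
    · -- REPLACE demotes LRU(T2)
      have ht2 : 1 ≤ s.T2.length := by omega
      have hne : s.T2 ≠ [] := by intro he; rw [he] at ht2; simp at ht2
      set m := s.T2.getLast hne with hmdef
      have hmT2 : m ∈ s.T2 := List.getLast_mem hne
      have hstep : arcStep N s x = ⟨s.T1, x :: s.T2.dropLast,
          s.B1.erase x, m :: s.B2, min (s.p + 1) N⟩ := by
        rw [ArcInvNS.arcStep_B1_B h1or hB1 hrep,
          StructAux.getLast?_toList_of_ne_nil _ hne, List.singleton_append]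
      set E := s.T2.dropLast with hEdef
      have hT2 : s.T2 = E ++ [m] := (List.dropLast_append_getLast hne).symm
      have hElen : E.length + 1 = s.T2.length := by rw [hT2]; simp
      have hL1 := Branch2.branchB_L1 (fun q : Page => decide (q ∈ O)) s.T1 s.B1 x
        (fun a ha hb => d13 ha hb) hB1 hPx hxT1
      have hL2 := Branch2.branchB_L2 (fun q : Page => decide (q ∈ O)) E s.B2 m x
        (fun h => d24 hmT2 h) (fun he => hxT2 (he ▸ hmT2)) hxB2 hPx
      rw [hstep]
      simp only [arcPhi, arcPhiAt, arcT, arcB1', arcB2', arcT1', arcT2', topLen]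
      rw [hT2]
      by_cases hxW : x ∈ (s.T1 ++ s.B1).takeWhile (fun r => decide (r ∈ O))
      · rw [hcc1 hxW] at *
        rw [if_pos hxW] at hL1
        simp only [List.length_cons, List.length_append, List.length_nil]
        have hdp : min (s.p + 1) N ≤ s.p + 1 := min_le_left _ _
        generalize min (s.p + 1) N = pn at hdp ⊢
        push_cast
        omega
      · rw [hcc2 hxW] at *
        rw [if_neg hxW] at hL1
        simp only [List.length_cons, List.length_append, List.length_nil]
        have hdp : min (s.p + 1) N ≤ s.p + 1 := min_le_left _ _
        generalize min (s.p + 1) N = pn at hdp ⊢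
        push_cast
        omega
  by_cases hxW : x ∈ (s.T1 ++ s.B1).takeWhile (fun r => decide (r ∈ O))
  · have h1 := main 1 (fun _ => rfl) (fun hc => absurd hxW hc)
    exact ⟨h1, fun _ => h1, fun hc => absurd hxW hc⟩
  · have h2 := main 2 (fun hc => absurd hc hxW) (fun _ => rfl)
    have h1 : arcPhi (arcStep N s x) O - arcPhi s O ≤ -1 := le_trans h2 (by norm_num)
    exact ⟨h1, fun _ => h1, fun _ => h2⟩
end
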